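/- arXiv:1312.6411 — 4 statements merged into one kernel-verified Lean document; each statement's English description precedes it below -/
import Mathlib

section
/- Let A be a nonpositive DG ring and P a DG A-module. Then P is pseudo-finite semi-free if and only if there exist an integer i₁ and natural numbers rᵢ for i ≤ i₁ such that the underlying graded A-module of P is isomorphic to the direct sum over i ≤ i₁ of rᵢ copies of A shifted by i. Moreover, P is finite semi-free if and only if additionally there is an integer i₀ with rᵢ = 0 for all i < i₀. -/
/-!
Common framework: nonpositive differential graded rings (DG rings), DG modules,
the category of DG modules, quasi-isomorphisms and derived categories
(presented as localizations at quasi-isomorphisms), semi-free DG modules, etc.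
-/

open CategoryTheory CategoryTheory.Limits MonoidalCategory

section DGPrelude

variable {R : Type} [Ring R] {𝒜 : ℤ → AddSubgroup R} [GradedRing 𝒜]
variable {S : Type} [Ring S] {𝓑 : ℤ → AddSubgroup S} [GradedRing 𝓑]

/-- A (nonpositive) DG ring structure on a `ℤ`-graded ring `(R, 𝒜)`:
a degree `1` differential satisfying `d ∘ d = 0` and the graded Leibniz rule,
with `𝒜 i = 0` for `i > 0`. -/
structure DGRing (R : Type) [Ring R] (𝒜 : ℤ → AddSubgroup R) [GradedRing 𝒜] : Type where
  d : R →+ R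
  d_mem : ∀ {i : ℤ} {a : R}, a ∈ 𝒜 i → d a ∈ 𝒜 (i + 1)
  d_sq : ∀ a : R, d (d a) = 0
  leibniz : ∀ {i : ℤ} (a b : R), a ∈ 𝒜 i →
      d (a * b) = d a * b + (Int.negOnePow i : ℤ) • (a * d b)
  nonpos : ∀ i : ℤ, 0 < i → 𝒜 i = ⊥

/-- A DG ring is (strongly) commutative if `b * a = (-1) ^ (i * j) * (a * b)` for homogeneous
elements of degrees `i, j`, and odd-degree elements square to zero. -/
structure IsCommDGRing (A : DGRing R 𝒜) : Prop where
  comm : ∀ {i j : ℤ} {a b : R}, a ∈ 𝒜 i → b ∈ 𝒜 j →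
      b * a = (Int.negOnePow (i * j) : ℤ) • (a * b)
  odd_sq : ∀ {i : ℤ} {a : R}, a ∈ 𝒜 i → Odd i → a * a = 0

/-- A (left) DG module over a DG ring. -/
structure DGMod (A : DGRing R 𝒜) : Type 1 where
  M : Type
  [addCommGroup : AddCommGroup M]
  [module : Module R M]
  grading : ℤ → AddSubgroup M
  [decomp : DirectSum.Decomposition grading]
  smul_mem : ∀ {i j : ℤ} {a : R} {m : M}, a ∈ 𝒜 i → m ∈ grading j → a • m ∈ grading (i + j)
  d : M →+ M
  d_mem : ∀ {i : ℤ} {m : M}, m ∈ grading i → d m ∈ grading (i + 1)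
  d_sq : ∀ m : M, d (d m) = 0
  leibniz : ∀ {i : ℤ} (a : R) (m : M), a ∈ 𝒜 i →
      d (a • m) = A.d a • m + (Int.negOnePow i : ℤ) • (a • d m)

attribute [instance] DGMod.addCommGroup DGMod.module DGMod.decomp

/-- The DG ring `A` viewed as a DG module over itself. -/
noncomputable def DGRing.self (A : DGRing R 𝒜) : DGMod A where
  M := R
  grading := 𝒜
  smul_mem ha hm := by simpa [smul_eq_mul] using SetLike.mul_mem_graded ha hm
  d := A.d
  d_mem := A.d_mem
  d_sq := A.d_sq
  leibniz a m ha := by simpa [smul_eq_mul] using A.leibniz a m ha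

variable {A : DGRing R 𝒜} {B : DGRing S 𝓑}

/-- Morphisms of DG modules: `R`-linear, degree `0`, commuting with differentials. -/
@[ext]
structure DGHom (M N : DGMod A) : Type where
  toFun : M.M →ₗ[R] N.M
  deg_mem : ∀ {i : ℤ} {m : M.M}, m ∈ M.grading i → toFun m ∈ N.grading i
  comm_d : ∀ m : M.M, toFun (M.d m) = N.d (toFun m)

/-- The category `M(A)` of DG `A`-modules. -/
instance : Category (DGMod A) where
  Hom M N := DGHom M N
  id M := ⟨LinearMap.id, fun h => h, fun _ => rfl⟩
  comp f g := ⟨g.toFun.comp f.toFun, fun h => g.deg_mem (f.deg_mem h), fun m => by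
    simp only [LinearMap.comp_apply, f.comm_d, g.comm_d]⟩
  id_comp f := DGHom.ext (LinearMap.comp_id _)
  comp_id f := DGHom.ext (LinearMap.id_comp _)
  assoc f g h := DGHom.ext rfl

/-- The underlying linear map of a morphism of DG modules. -/
def dgfn {M N : DGMod A} (f : M ⟶ N) : M.M →ₗ[R] N.M := DGHom.toFun f

namespace DGMod

/-- The cohomology `H^i(M)` is nonzero: there is a degree-`i` cocycle which is not
a boundary. -/
def HNonzeroAt (M : DGMod A) (i : ℤ) : Prop :=
  ∃ m ∈ M.grading i, M.d m = 0 ∧ ¬ ∃ p, M.d p = m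

/-- `M` is acyclic, i.e. `H(M) = 0`. -/
def HZero (M : DGMod A) : Prop := ∀ i, ¬ M.HNonzeroAt i

/-- `M ∈ D⁻(A)`: the cohomology of `M` is bounded above. -/
def CohBoundedAbove (M : DGMod A) : Prop := ∃ n : ℤ, ∀ i, M.HNonzeroAt i → i ≤ n

/-- `M ∈ D⁺(A)`: the cohomology of `M` is bounded below. -/
def CohBoundedBelow (M : DGMod A) : Prop := ∃ n : ℤ, ∀ i, M.HNonzeroAt i → n ≤ i

/-- `M ∈ Dᵇ(A)`. -/
def CohBounded (M : DGMod A) : Prop := M.CohBoundedAbove ∧ M.CohBoundedBelow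

/-- `H^i(M)` is a finite (finitely generated) module over `Ā = H⁰(A)`: there are finitely
many degree-`i` cocycles generating all degree-`i` cocycles modulo boundaries. -/
def HFiniteAt (M : DGMod A) (i : ℤ) : Prop :=
  ∃ s : Finset M.M, (∀ x ∈ s, x ∈ M.grading i ∧ M.d x = 0) ∧
    ∀ m ∈ M.grading i, M.d m = 0 →
      ∃ v ∈ Submodule.span R (s : Set M.M), ∃ p, m = v + M.d p

/-- `M ∈ D_f(A)`. -/
def CohFinite (M : DGMod A) : Prop := ∀ i, M.HFiniteAt i

/-- `M` is concentrated in degree `0`; equivalently, `M` is (the image of) a module over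
`Ā = H⁰(A)`, restricted along the canonical homomorphism `A → Ā`. -/
def Deg0Module (M : DGMod A) : Prop := ∀ i, i ≠ 0 → M.grading i = ⊥

end DGMod

/-- Quasi-isomorphisms of DG modules: the induced map on cohomology is bijective
in each degree. -/
def qiso {M N : DGMod A} (f : M ⟶ N) : Prop :=
  (∀ i : ℤ, ∀ n ∈ N.grading i, N.d n = 0 →
      ∃ m ∈ M.grading i, M.d m = 0 ∧ ∃ p, n - dgfn f m = N.d p) ∧
  (∀ i : ℤ, ∀ m ∈ M.grading i, M.d m = 0 → (∃ p, dgfn f m = N.d p) → ∃ q, M.d q = m)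

/-- The class of quasi-isomorphisms in `M(A)`; the derived category `D(A)` is the
localization of `M(A)` at this class. -/
def qis (A : DGRing R 𝒜) : MorphismProperty (DGMod A) := fun _ _ f => qiso f

/-- Homomorphisms of DG rings. -/
structure DGRingHom (A : DGRing R 𝒜) (B : DGRing S 𝓑) : Type where
  toRingHom : R →+* S
  deg_mem : ∀ {i : ℤ} {a : R}, a ∈ 𝒜 i → toRingHom a ∈ 𝓑 i
  comm_d : ∀ a : R, toRingHom (A.d a) = B.d (toRingHom a)

/-- A DG ring homomorphism is a quasi-isomorphism. -/
def DGRingHom.qiso (f : DGRingHom A B) : Prop :=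
  (∀ i : ℤ, ∀ b ∈ 𝓑 i, B.d b = 0 →
      ∃ a ∈ 𝒜 i, A.d a = 0 ∧ ∃ p, b - f.toRingHom a = B.d p) ∧
  (∀ i : ℤ, ∀ a ∈ 𝒜 i, A.d a = 0 → (∃ p, f.toRingHom a = B.d p) → ∃ q, A.d q = a)

/-- Restriction of a DG `B`-module along a DG ring homomorphism `A → B`. -/
def DGRingHom.rest (f : DGRingHom A B) (N : DGMod B) : DGMod A where
  M := N.M
  module := Module.compHom N.M f.toRingHom
  grading := N.grading
  smul_mem ha hm := N.smul_mem (f.deg_mem ha) hm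
  d := N.d
  d_mem := N.d_mem
  d_sq := N.d_sq
  leibniz a m ha := by
    have h := N.leibniz (f.toRingHom a) m (f.deg_mem ha)
    rw [← f.comm_d] at h
    exact h

/-- The restriction functor `rest_f : M(B) → M(A)`. -/
def DGRingHom.restFunctor (f : DGRingHom A B) : DGMod B ⥤ DGMod A where
  obj := f.rest
  map {N N'} g :=
    { toFun :=
      { toFun := (dgfn g : N.M →ₗ[S] N'.M)
        map_add' := fun x y => map_add _ x y
        map_smul' := fun a m => (dgfn g).map_smul (f.toRingHom a) m }
      deg_mem := fun h => g.deg_mem h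
      comm_d := fun m => g.comm_d m }
  map_id N := DGHom.ext (by ext m; rfl)
  map_comp g h := DGHom.ext (by ext m; rfl)

/-- The underlying function of a morphism into a restricted DG module. -/
def restFn {P : DGMod A} {N : DGMod B} (f : DGRingHom A B) (φ : P ⟶ f.rest N) :
    P.M → N.M := fun p => dgfn φ p

/-- `π : A → Ā` exhibits the DG ring `Ā` (concentrated in degree `0`) as the reduction
`Ā = H⁰(A)` of `A`. -/
structure IsReduction (π : DGRingHom A B) : Prop where
  conc : ∀ i : ℤ, i ≠ 0 → 𝓑 i = ⊥
  surj : ∀ b : S, ∃ a ∈ 𝒜 0, π.toRingHom a = b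
  inj : ∀ a ∈ 𝒜 0, π.toRingHom a = 0 → ∃ p, A.d p = a

/-- The set of homogeneous elements of negative degree, together with boundaries of
elements of degree `-1`; these generate `ker(A → Ā)`. -/
def augSet (A : DGRing R 𝒜) : Set R :=
  {a | (∃ i, i < 0 ∧ a ∈ 𝒜 i) ∨ ∃ b ∈ 𝒜 (-1), A.d b = a}

/-- `φ : P → N` exhibits `N` (a DG module over the reduction `Ā`) as the reduction
`Ā ⊗_A P` of the DG `A`-module `P`. -/
def IsReductionMod (π : DGRingHom A B) (P : DGMod A) (N : DGMod B) (φ : P ⟶ π.rest N) :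
    Prop :=
  (∀ i : ℤ, ∀ x ∈ N.grading i, ∃ p ∈ P.grading i, dgfn φ p = x) ∧
  (∀ p : P.M, dgfn φ p = 0 ↔
      p ∈ Submodule.span R {y | ∃ a ∈ augSet A, ∃ m : P.M, y = a • m})

/-- A semi-basis of a DG module: a homogeneous basis `b` of the underlying graded module,
filtered (by `filt`) so that the differential of a basis element lies in the span of
strictly lower filtration levels.  A DG module is semi-free iff it admits a semi-basis. -/
structure SemiBasis (P : DGMod A) : Type 1 where
  ι : Type
  b : Module.Basis ι R P.M
  ndeg : ι → ℤ
  homog : ∀ k, b k ∈ P.grading (ndeg k)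
  filt : ι → ℕ
  d_mem : ∀ k, P.d (b k) ∈
    Submodule.span R (Set.range fun l : {l : ι // filt l < filt k} => b l.1)

/-- Semi-free DG modules. -/
def IsSemiFree (P : DGMod A) : Prop := Nonempty (SemiBasis P)

/-- A semi-basis is pseudo-finite if each filtration level is finite, and the degrees of the
basis elements tend to `-∞` along the filtration. -/
def SemiBasis.PseudoFinite {P : DGMod A} (sb : SemiBasis P) : Prop :=
  (∀ j : ℕ, {k | sb.filt k = j}.Finite) ∧
  ∀ c : ℤ, ∃ j₀ : ℕ, ∀ k, j₀ ≤ sb.filt k → sb.ndeg k ≤ c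

/-- Pseudo-finite semi-free DG modules. -/
def IsPseudoFiniteSemiFree (P : DGMod A) : Prop := ∃ sb : SemiBasis P, sb.PseudoFinite

/-- Finite semi-free DG modules: a pseudo-finite semi-basis of finite filtration length,
equivalently a finite semi-basis. -/
def IsFiniteSemiFree (P : DGMod A) : Prop := ∃ sb : SemiBasis P, Finite sb.ι

/-- `P` is semi-free of semi-free length at most `l`. -/
def SemiFreeLengthLE (P : DGMod A) (l : ℕ) : Prop := ∃ sb : SemiBasis P, ∀ k, sb.filt k < l

/-- `P` is a free DG module on a basis concentrated in degree `0` indexed by `κ`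
(a direct sum of copies of `A`, `P ≅ A^{⊕κ}`). -/
def IsFreeDeg0On (P : DGMod A) (κ : Type) : Prop :=
  ∃ sb : SemiBasis P, Nonempty (sb.ι ≃ κ) ∧ (∀ k, sb.ndeg k = 0) ∧ (∀ k, sb.filt k = 0)

/-- `M` is generated (as a graded module) in degrees lying in the set `I`:
it is generated over `R` by homogeneous elements with degrees in `I`. -/
def GeneratedIn (M : DGMod A) (I : Set ℤ) : Prop :=
  ∃ G : Set M.M, (∀ x ∈ G, ∃ i ∈ I, x ∈ M.grading i) ∧ Submodule.span R G = ⊤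

/-- The multiplicative set `S̃ = π⁻¹({sⁿ}) ∩ A⁰ ⊆ A⁰` of elements of degree `0` mapping in
`Ā = H⁰(A)` to a power of (the class of) `s`. -/
def locSet (A : DGRing R 𝒜) (s : R) : Set R :=
  {a | a ∈ 𝒜 0 ∧ ∃ n : ℕ, ∃ p, a - s ^ n = A.d p}

/-- `f : A → B` exhibits `B` as the localization of the DG ring `A` at the multiplicative
set `T ⊆ A⁰`. -/
def IsDGLocalization (f : DGRingHom A B) (T : Set R) : Prop :=
  (∀ t ∈ T, IsUnit (f.toRingHom t)) ∧
  (∀ i : ℤ, ∀ b ∈ 𝓑 i, ∃ a ∈ 𝒜 i, ∃ t ∈ T, f.toRingHom t * b = f.toRingHom a) ∧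
  (∀ a : R, f.toRingHom a = 0 → ∃ t ∈ T, t * a = 0)

/-- `φ : P → P'` exhibits the DG `B`-module `P'` as the localization `B ⊗_A P` of `P`
at `T` (where `f : A → B` is the corresponding localization of DG rings). -/
def IsLocalizedDGMod (f : DGRingHom A B) (T : Set R) {P : DGMod A} {P' : DGMod B}
    (φ : P ⟶ f.rest P') : Prop :=
  (∀ i : ℤ, ∀ x ∈ P'.grading i, ∃ p ∈ P.grading i, ∃ t ∈ T, f.toRingHom t • x = dgfn φ p) ∧
  (∀ p : P.M, dgfn φ p = 0 → ∃ t ∈ T, t • p = 0)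

/-- A covering sequence of `Ā = H⁰(A)`: degree-`0` elements whose classes generate the
unit ideal of `Ā`. -/
def IsCoveringSeq (A : DGRing R 𝒜) {n : ℕ} (s : Fin n → R) : Prop :=
  (∀ k, s k ∈ 𝒜 0) ∧
  ∃ c : Fin n → R, (∀ k, c k ∈ 𝒜 0) ∧ ∃ p, (∑ k, c k * s k) - 1 = A.d p

/-- An idempotent covering sequence of `Ā = H⁰(A)`: pairwise orthogonal idempotents of
`Ā` summing to `1` (all conditions on classes modulo boundaries). -/
def IsIdempotentCoveringSeq (A : DGRing R 𝒜) {n : ℕ} (e : Fin n → R) : Prop :=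
  (∀ k, e k ∈ 𝒜 0) ∧ (∀ k, ∃ p, e k * e k - e k = A.d p) ∧
  (∀ k l, k ≠ l → ∃ p, e k * e l = A.d p) ∧ ∃ p, (∑ k, e k) - 1 = A.d p

end DGPrelude

/-- A bundled DG ring. -/
structure DGRingPack : Type 1 where
  S : Type
  [ringS : Ring S]
  𝓑 : ℤ → AddSubgroup S
  [gradedS : GradedRing 𝓑]
  B : DGRing S 𝓑

attribute [instance] DGRingPack.ringS DGRingPack.gradedS

section DGPrelude2

variable {R : Type} [Ring R] {𝒜 : ℤ → AddSubgroup R} [GradedRing 𝒜] {A : DGRing R 𝒜}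

/-- `P` is a geometrically perfect DG module: locally on `Spec Ā`, for a covering sequence
`s` of `Ā`, the localized DG module `A_{sₖ} ⊗_A P` is isomorphic in the derived category to
a finite semi-free DG module. -/
def IsGeomPerfect (A : DGRing R 𝒜) (P : DGMod A) : Prop :=
  ∃ (n : ℕ) (s : Fin n → R), IsCoveringSeq A s ∧
    ∀ k : Fin n, ∃ (W : DGRingPack) (f : DGRingHom A W.B),
      IsDGLocalization f (locSet A (s k)) ∧
      ∃ (P' : DGMod W.B) (φ : P ⟶ f.rest P'), IsLocalizedDGMod f (locSet A (s k)) φ ∧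
        ∃ (F : DGMod W.B) (g : F ⟶ P'), IsFiniteSemiFree F ∧ qiso g

/-- Bilinear, balanced, graded, differential-compatible pairings `M × N → T`
of DG `A`-modules. -/
structure BilinData (M N T : DGMod A) : Type where
  τ : M.M → N.M → T.M
  add_left : ∀ m m' n, τ (m + m') n = τ m n + τ m' n
  add_right : ∀ m n n', τ m (n + n') = τ m n + τ m n'
  smul_left : ∀ (a : R) (m : M.M) (n : N.M), τ (a • m) n = a • τ m n
  bal : ∀ {i j : ℤ} {a : R} {m : M.M}, a ∈ 𝒜 i → m ∈ M.grading j → ∀ n,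
      τ (a • m) n = (Int.negOnePow (i * j) : ℤ) • τ m (a • n)
  deg : ∀ {i j : ℤ} {m : M.M} {n : N.M}, m ∈ M.grading i → n ∈ N.grading j →
      τ m n ∈ T.grading (i + j)
  d_comp : ∀ {i : ℤ} {m : M.M}, m ∈ M.grading i → ∀ n,
      T.d (τ m n) = τ (M.d m) n + (Int.negOnePow i : ℤ) • τ m (N.d n)

/-- `T` together with a universal pairing `τ` is the tensor product `M ⊗_A N`. -/
structure TensorData (M N : DGMod A) : Type 1 where
  T : DGMod A
  bil : BilinData M N T
  gen : Submodule.span R {x | ∃ m n, x = bil.τ m n} = ⊤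
  universal : ∀ (C : DGMod A) (γ : BilinData M N C),
      ∃ ψ : T ⟶ C, ∀ m n, dgfn ψ (bil.τ m n) = γ.τ m n

/-- `P` is K-flat: its tensor product with any acyclic DG module is acyclic. -/
def KFlat (P : DGMod A) : Prop :=
  ∀ (N : DGMod A) (td : TensorData P N), N.HZero → td.T.HZero

/-- The monoidal structure on the localized category `D` is compatible with the derived
tensor product: for `M` K-flat, `Q(M) ⊗ Q(N) ≅ Q(M ⊗_A N)`. -/
def TensorCompatible {D : Type 1} [Category.{0} D] [MonoidalCategory D]
    (Q : DGMod A ⥤ D) : Prop :=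
  ∀ (M N : DGMod A) (td : TensorData M N), KFlat M →
    Nonempty ((Q.obj M ⊗ Q.obj N) ≅ Q.obj td.T)

/-- The shift functors of `D` are compatible with cohomology. -/
def ShiftCompatible {D : Type 1} [Category.{0} D] [HasShift D ℤ]
    (Q : DGMod A ⥤ D) : Prop :=
  ∀ (M N : DGMod A) (k : ℤ), Nonempty (Q.obj N ≅ (Q.obj M)⟦k⟧) →
    ∀ i : ℤ, N.HNonzeroAt i ↔ M.HNonzeroAt (i + k)

end DGPrelude2

section CatPrelude

variable {D : Type 1} [Category.{0} D]

/-- The comparison map `⊕ᵢ Hom(L, Xᵢ) → Hom(L, ∐ X)`. -/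
noncomputable def coprodCompare [Preadditive D] (L : D) {ι : Type} [DecidableEq ι] (X : ι → D)
    [Limits.HasCoproduct X] : (Π₀ i, (L ⟶ X i)) →+ (L ⟶ ∐ X) :=
  DFinsupp.sumAddHom fun i =>
    AddMonoidHom.mk' (fun g => g ≫ Limits.Sigma.ι X i) fun _ _ =>
      Preadditive.add_comp _ _ _ _ _ _

/-- `L` is a compact object: `Hom(L, -)` commutes with arbitrary direct sums. -/
def IsCompactObj [Preadditive D] (L : D) : Prop :=
  ∀ (ι : Type) (inst : DecidableEq ι) (X : ι → D) (h : Limits.HasCoproduct X),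
    Function.Bijective (@coprodCompare D _ _ L ι inst X h)

/-- A tilting object of a monoidal category: it has a quasi-inverse w.r.t. `⊗`. -/
def IsTilting [MonoidalCategory D] (X : D) : Prop :=
  ∃ Y : D, Nonempty ((X ⊗ Y) ≅ 𝟙_ D)

/-- The canonical "adjunction" morphism `𝟙 ⟶ RHom(X, X)` in a closed monoidal category. -/
noncomputable def adjUnit [MonoidalCategory D] [MonoidalClosed D] (X : D) :
    𝟙_ D ⟶ (ihom X).obj X :=
  MonoidalClosed.curry (ρ_ X).hom

/-- The canonical morphism `RHom(L, M) ⊗ N ⟶ RHom(L, M ⊗ N)`. -/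
noncomputable def rhomTensorCompare [MonoidalCategory D] [MonoidalClosed D] (L M N : D) :
    ((ihom L).obj M ⊗ N) ⟶ (ihom L).obj (M ⊗ N) :=
  MonoidalClosed.curry ((α_ L ((ihom L).obj M) N).inv ≫ ((ihom.ev L).app M ▷ N))

/-- The biduality morphism `X ⟶ RHom(RHom(X, E), E)`. -/
noncomputable def bidualityMap [MonoidalCategory D] [MonoidalClosed D]
    [BraidedCategory D] (E X : D) :
    X ⟶ (ihom ((ihom X).obj E)).obj E :=
  MonoidalClosed.curry ((β_ ((ihom X).obj E) X).hom ≫ (ihom.ev X).app E)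

/-- The setoid of isomorphism on a class of objects of a category. -/
def isoSetoid (P : D → Prop) : Setoid {X : D // P X} :=
  ⟨fun X Y => Nonempty (X.1 ≅ Y.1),
    ⟨fun _ => ⟨Iso.refl _⟩, fun ⟨e⟩ => ⟨e.symm⟩, fun ⟨e⟩ ⟨f⟩ => ⟨e.trans f⟩⟩⟩

/-- Isomorphism classes of objects satisfying `P`. -/
def IsoClasses (P : D → Prop) : Type 1 := Quotient (isoSetoid P)

end CatPrelude

/-- An invertible module over a commutative ring. -/
def IsInvertibleModule {B : Type} [CommRing B] (M : ModuleCat B) : Prop :=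
  ∃ N : ModuleCat B, Nonempty ((M ⊗ N) ≅ ModuleCat.of B B)

/-- The Picard "set" of a commutative ring: isomorphism classes of invertible modules. -/
def PicCls (B : Type) [CommRing B] : Type 1 :=
  IsoClasses (D := ModuleCat B) IsInvertibleModule

/-- The derived Picard "set" of a monoidal category: isomorphism classes of tilting
objects. -/
def DPicCls (D : Type 1) [Category.{0} D] [MonoidalCategory D] : Type 1 :=
  IsoClasses (D := D) IsTilting
section Statement0

variable {R : Type} [Ring R] {𝒜 : ℤ → AddSubgroup R} [GradedRing 𝒜] {A : DGRing R 𝒜}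

/-- The underlying graded `A^♮`-module of `P` is isomorphic to
`⊕_{i} A^♮[-i]^{⊕ r i}`: there is a homogeneous basis with exactly `r i` elements
in each degree `i`. -/
def GradedFreeOn (P : DGMod A) (r : ℤ → ℕ) : Prop :=
  ∃ (ι : Type) (b : Module.Basis ι R P.M) (ndeg : ι → ℤ),
    (∀ k, b k ∈ P.grading (ndeg k)) ∧
    ∀ i : ℤ, Nonempty ({k : ι // ndeg k = i} ≃ Fin (r i))

/-- The projection onto the degree `t` component, as an additive map. -/
noncomputable def projHom (P : DGMod A) (t : ℤ) : P.M →+ P.M where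
  toFun m := (DirectSum.decompose P.grading m t : P.M)
  map_zero' := by simp
  map_add' x y := by dsimp only; rw [DirectSum.decompose_add]; simp

lemma projHom_apply (P : DGMod A) (t : ℤ) (m : P.M) :
    projHom P t m = (DirectSum.decompose P.grading m t : P.M) := rfl

lemma projHom_of_mem_same (P : DGMod A) {t : ℤ} {m : P.M} (h : m ∈ P.grading t) :
    projHom P t m = m :=
  DirectSum.decompose_of_mem_same _ h

lemma projHom_of_mem_ne (P : DGMod A) {s t : ℤ} {m : P.M} (h : m ∈ P.grading s)
    (hne : s ≠ t) : projHom P t m = 0 := by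
  exact DirectSum.decompose_of_mem_ne P.grading h hne

lemma projHom_smul_of_mem (P : DGMod A) (c : R) {j : ℤ} {m : P.M}
    (hm : m ∈ P.grading j) (t : ℤ) :
    projHom P t (c • m) = (DirectSum.decompose 𝒜 c (t - j) : R) • m := by
  classical
  conv_lhs => rw [← DirectSum.sum_support_decompose 𝒜 c, Finset.sum_smul, map_sum]
  have key : ∀ i : ℤ, projHom P t ((DirectSum.decompose 𝒜 c i : R) • m)
      = if i = t - j then (DirectSum.decompose 𝒜 c i : R) • m else 0 := by
    intro i
    have hmem : (DirectSum.decompose 𝒜 c i : R) • m ∈ P.grading (i + j) :=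
      P.smul_mem (SetLike.coe_mem _) hm
    by_cases h : i = t - j
    · rw [if_pos h]
      exact projHom_of_mem_same P (by rwa [show i + j = t by omega] at hmem)
    · rw [if_neg h]
      exact projHom_of_mem_ne P hmem (by omega)
  rw [Finset.sum_congr rfl fun i _ => key i, Finset.sum_ite_eq' _ (t - j)]
  by_cases h : t - j ∈ (DirectSum.decompose 𝒜 c).support
  · rw [if_pos h]
  · rw [if_neg h]
    have h0 : (DirectSum.decompose 𝒜 c) (t - j) = 0 := DFinsupp.notMem_support_iff.mp h
    rw [h0]
    simp

/-- A homogeneous element of degree `n + 1` lies in the span of the basis elements of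
degree `> n`. -/
lemma homog_mem_span_higher (P : DGMod A) {ι : Type} (b : Module.Basis ι R P.M) (ndeg : ι → ℤ)
    (homog : ∀ k, b k ∈ P.grading (ndeg k)) {n : ℤ} {x : P.M}
    (hx : x ∈ P.grading (n + 1)) :
    x ∈ Submodule.span R (Set.range fun l : {l : ι // n < ndeg l} => b l.1) := by
  classical
  have h2 : ∑ l ∈ (b.repr x).support, b.repr x l • b l = x := by
    conv_rhs => rw [← b.linearCombination_repr x]
    rw [Finsupp.linearCombination_apply, Finsupp.sum]
  have h1 : x = ∑ l ∈ (b.repr x).support, projHom P (n + 1) (b.repr x l • b l) := by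
    rw [← map_sum, h2, projHom_of_mem_same P hx]
  rw [h1]
  refine Submodule.sum_mem _ fun l _ => ?_
  rw [projHom_smul_of_mem P _ (homog l)]
  by_cases h : n < ndeg l
  · exact Submodule.smul_mem _ _ (Submodule.subset_span ⟨⟨l, h⟩, rfl⟩)
  · have hall : ∀ y : R, y ∈ 𝒜 (n + 1 - ndeg l) → y = 0 := by
      intro y hy
      rw [A.nonpos _ (by omega)] at hy
      simpa using hy
    have hb : (DirectSum.decompose 𝒜 (b.repr x l) (n + 1 - ndeg l) : R) = 0 :=
      hall _ (SetLike.coe_mem _)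
    rw [hb, zero_smul]
    exact Submodule.zero_mem _

/-- Build a semi-basis from a homogeneous basis with degrees bounded above by `i₁`,
filtered by codegree. -/
noncomputable def mkSB (P : DGMod A) {ι : Type} (b : Module.Basis ι R P.M) (ndeg : ι → ℤ)
    (homog : ∀ k, b k ∈ P.grading (ndeg k)) (i₁ : ℤ) (hub : ∀ k, ndeg k ≤ i₁) :
    SemiBasis P where
  ι := ι
  b := b
  ndeg := ndeg
  homog := homog
  filt k := (i₁ - ndeg k).toNat
  d_mem k := by
    have h := homog_mem_span_higher P b ndeg homog (P.d_mem (homog k))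
    refine Submodule.span_mono ?_ h
    rintro _ ⟨⟨l, hl⟩, rfl⟩
    refine ⟨⟨l, ?_⟩, rfl⟩
    have h1 := hub l
    have h2 := hub k
    rw [Int.toNat_lt_toNat (by omega)]
    omega

/-- Proposition 5.7 of the paper.  Let `A` be a nonpositive DG ring and
`P` a DG `A`-module.  Then `P` is pseudo-finite semi-free iff there are `i₁ : ℤ` and
ranks `r i ∈ ℕ` (vanishing for `i > i₁`) such that `P^♮ ≅ ⊕_{i ≤ i₁} A^♮[-i]^{⊕ rᵢ}`
as graded `A^♮`-modules; and `P` is finite semi-free iff moreover there is `i₀` with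
`r i = 0` for all `i < i₀`. -/
theorem statement0 (A : DGRing R 𝒜) (P : DGMod A) :
    (IsPseudoFiniteSemiFree P ↔
      ∃ (i₁ : ℤ) (r : ℤ → ℕ), (∀ i : ℤ, i₁ < i → r i = 0) ∧ GradedFreeOn P r) ∧
    (IsFiniteSemiFree P ↔
      ∃ (i₁ : ℤ) (r : ℤ → ℕ), (∀ i : ℤ, i₁ < i → r i = 0) ∧ GradedFreeOn P r ∧
        ∃ i₀ : ℤ, ∀ i : ℤ, i < i₀ → r i = 0) := by
  classical
  constructor
  · constructor
    · rintro ⟨sb, hlev, hdeg⟩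
      have hfib : ∀ i : ℤ, ({k | sb.ndeg k = i} : Set sb.ι).Finite := by
        intro i
        obtain ⟨j₀, hj₀⟩ := hdeg (i - 1)
        refine (Set.Finite.biUnion (Finset.range j₀).finite_toSet fun j _ => hlev j).subset ?_
        intro k hk
        simp only [Set.mem_setOf_eq] at hk
        simp only [Set.mem_iUnion, Finset.mem_coe, Finset.mem_range, Set.mem_setOf_eq]
        refine ⟨sb.filt k, ?_, rfl⟩
        by_contra hcon
        push_neg at hcon
        have := hj₀ k (by omega)
        omega
      haveI : ∀ i : ℤ, Finite {k : sb.ι // sb.ndeg k = i} := fun i => (hfib i).to_subtype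
      obtain ⟨j₀, hj₀⟩ := hdeg 0
      have hS : ({k | sb.filt k < j₀} : Set sb.ι).Finite := by
        refine (Set.Finite.biUnion (Finset.range j₀).finite_toSet fun j _ => hlev j).subset ?_
        intro k hk
        simp only [Set.mem_setOf_eq] at hk
        simp only [Set.mem_iUnion, Finset.mem_coe, Finset.mem_range, Set.mem_setOf_eq]
        exact ⟨sb.filt k, hk, rfl⟩
      set i₁ : ℤ := ((hS.toFinset.sup fun k => (sb.ndeg k).toNat : ℕ) : ℤ) with hi₁
      have hub : ∀ k, sb.ndeg k ≤ i₁ := by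
        intro k
        by_cases hk : sb.filt k < j₀
        · have hmem : k ∈ hS.toFinset := hS.mem_toFinset.mpr hk
          have h1 : (sb.ndeg k).toNat ≤ hS.toFinset.sup fun k => (sb.ndeg k).toNat :=
            Finset.le_sup (f := fun k => (sb.ndeg k).toNat) hmem
          have h2 : (((sb.ndeg k).toNat : ℕ) : ℤ) ≤ i₁ := by rw [hi₁]; exact_mod_cast h1
          omega
        · have h1 := hj₀ k (by omega)
          have h2 : (0:ℤ) ≤ i₁ := by rw [hi₁]; exact_mod_cast Nat.zero_le _
          omega
      refine ⟨i₁, fun i => Nat.card {k : sb.ι // sb.ndeg k = i}, ?_,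
        sb.ι, sb.b, sb.ndeg, sb.homog, fun i => ⟨Finite.equivFin _⟩⟩
      intro i hi
      haveI : IsEmpty {k : sb.ι // sb.ndeg k = i} :=
        ⟨fun ⟨k, hk⟩ => by have := hub k; omega⟩
      exact Nat.card_of_isEmpty
    · rintro ⟨i₁, r, hr, ι, b, ndeg, homog, hcard⟩
      have hub : ∀ k, ndeg k ≤ i₁ := by
        intro k
        by_contra hk
        push_neg at hk
        have h0 := hr _ hk
        obtain ⟨e⟩ := hcard (ndeg k)
        rw [h0] at e
        exact (e ⟨k, rfl⟩).elim0
      refine ⟨mkSB P b ndeg homog i₁ hub, ?_, ?_⟩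
      · intro j
        haveI : Finite {k : ι // ndeg k = i₁ - j} :=
          Finite.of_equiv _ (hcard (i₁ - j)).some.symm
        refine Set.finite_coe_iff.mp (Finite.of_injective
          (fun x : {k | (mkSB P b ndeg homog i₁ hub).filt k = j} =>
            (⟨x.1, by
              have h1 := hub x.1
              have h2 : (i₁ - ndeg x.1).toNat = j := x.2
              omega⟩ : {k : ι // ndeg k = i₁ - j})) ?_)
        intro x y hxy
        have h := congrArg (fun z : {k : ι // ndeg k = i₁ - j} => z.1) hxy
        exact Subtype.ext h
      · intro c
        refine ⟨(i₁ - c).toNat + 1, fun k hk => ?_⟩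
        have hk' : (i₁ - c).toNat + 1 ≤ (i₁ - ndeg k).toNat := hk
        show ndeg k ≤ c
        omega
  · constructor
    · rintro ⟨sb, hfin⟩
      haveI := hfin
      haveI := Fintype.ofFinite sb.ι
      set i₁ : ℤ := ((Finset.univ.sup fun k => (sb.ndeg k).toNat : ℕ) : ℤ) with hi₁
      set i₀ : ℤ := -((Finset.univ.sup fun k => (-sb.ndeg k).toNat : ℕ) : ℤ) with hi₀
      have hub : ∀ k, sb.ndeg k ≤ i₁ := by
        intro k
        have h1 : (sb.ndeg k).toNat ≤ Finset.univ.sup fun k => (sb.ndeg k).toNat :=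
          Finset.le_sup (f := fun k => (sb.ndeg k).toNat) (Finset.mem_univ k)
        have h2 : (((sb.ndeg k).toNat : ℕ) : ℤ) ≤ i₁ := by rw [hi₁]; exact_mod_cast h1
        omega
      have hlb : ∀ k, i₀ ≤ sb.ndeg k := by
        intro k
        have h1 : (-sb.ndeg k).toNat ≤ Finset.univ.sup fun k => (-sb.ndeg k).toNat :=
          Finset.le_sup (f := fun k => (-sb.ndeg k).toNat) (Finset.mem_univ k)
        have h2 : (((-sb.ndeg k).toNat : ℕ) : ℤ) ≤ -i₀ := by rw [hi₀]; omega
        omega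
      refine ⟨i₁, fun i => Nat.card {k : sb.ι // sb.ndeg k = i}, ?_,
        ⟨sb.ι, sb.b, sb.ndeg, sb.homog, fun i => ⟨Finite.equivFin _⟩⟩, i₀, ?_⟩
      · intro i hi
        haveI : IsEmpty {k : sb.ι // sb.ndeg k = i} :=
          ⟨fun ⟨k, hk⟩ => by have := hub k; omega⟩
        exact Nat.card_of_isEmpty
      · intro i hi
        haveI : IsEmpty {k : sb.ι // sb.ndeg k = i} :=
          ⟨fun ⟨k, hk⟩ => by have := hlb k; omega⟩
        exact Nat.card_of_isEmpty
    · rintro ⟨i₁, r, hr, ⟨ι, b, ndeg, homog, hcard⟩, i₀, hr0⟩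
      have hub : ∀ k, ndeg k ≤ i₁ := by
        intro k
        by_contra hk
        push_neg at hk
        have h0 := hr _ hk
        obtain ⟨e⟩ := hcard (ndeg k)
        rw [h0] at e
        exact (e ⟨k, rfl⟩).elim0
      have hlb : ∀ k, i₀ ≤ ndeg k := by
        intro k
        by_contra hk
        push_neg at hk
        have h0 := hr0 _ hk
        obtain ⟨e⟩ := hcard (ndeg k)
        rw [h0] at e
        exact (e ⟨k, rfl⟩).elim0
      have hfib : ∀ i : ℤ, ({k | ndeg k = i} : Set ι).Finite := fun i =>
        Set.finite_coe_iff.mp (Finite.of_equiv _ (hcard i).some.symm)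
      have hfinι : Finite ι := by
        rw [← Set.finite_univ_iff]
        refine (Set.Finite.biUnion (Finset.Icc i₀ i₁).finite_toSet fun i _ => hfib i).subset ?_
        intro k _
        simp only [Set.mem_iUnion, Finset.mem_coe, Finset.mem_Icc, Set.mem_setOf_eq]
        exact ⟨ndeg k, ⟨hlb k, hub k⟩, rfl⟩
      exact ⟨mkSB P b ndeg homog i₁ hub, hfinι⟩

end Statement0
end

section
/- Let A be a nonpositive DG ring. Then the derived reduction functor M ↦ Ā ⊗^L_A M from D⁻(A) to D⁻(Ā) is conservative: if Ā ⊗^L_A M ≅ 0 then M ≅ 0. -/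
/-!
Common framework: nonpositive differential graded rings (DG rings), DG modules,
the category of DG modules, quasi-isomorphisms and derived categories
(presented as localizations at quasi-isomorphisms), semi-free DG modules, etc.
-/

open CategoryTheory CategoryTheory.Limits MonoidalCategory

open DirectSum

section S3Aux

variable {R : Type} [Ring R] {𝒜 : ℤ → AddSubgroup R} [GradedRing 𝒜] {A : DGRing R 𝒜}

/-- The degree-`j` graded component of an element of a DG module. -/
noncomputable def pcmp (P : DGMod A) (j : ℤ) (x : P.M) : P.M :=
  (DirectSum.decompose P.grading x j : P.M)

lemma pcmp_mem (P : DGMod A) (j : ℤ) (x : P.M) : pcmp P j x ∈ P.grading j :=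
  SetLike.coe_mem _

lemma pcmp_zero (P : DGMod A) (j : ℤ) : pcmp P j 0 = 0 := by
  simp [pcmp]

lemma pcmp_add (P : DGMod A) (j : ℤ) (x y : P.M) :
    pcmp P j (x + y) = pcmp P j x + pcmp P j y := by
  simp [pcmp, DirectSum.decompose_add]

lemma pcmp_neg (P : DGMod A) (j : ℤ) (x : P.M) : pcmp P j (-x) = -pcmp P j x := by
  have := pcmp_add P j x (-x)
  simp only [add_neg_cancel, pcmp_zero] at this
  linear_combination (norm := abel) -this

lemma pcmp_of_mem_same (P : DGMod A) {j : ℤ} {x : P.M} (hx : x ∈ P.grading j) :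
    pcmp P j x = x :=
  DirectSum.decompose_of_mem_same _ hx

lemma pcmp_of_mem_ne (P : DGMod A) {i j : ℤ} {x : P.M} (hx : x ∈ P.grading i) (hij : i ≠ j) :
    pcmp P j x = 0 :=
  DirectSum.decompose_of_mem_ne _ hx hij

lemma pcmp_d (P : DGMod A) (j : ℤ) (x : P.M) :
    pcmp P (j + 1) (P.d x) = P.d (pcmp P j x) := by
  induction x using DirectSum.Decomposition.inductionOn P.grading with
  | zero => simp [pcmp_zero, map_zero]
  | @homogeneous i m =>
      by_cases hij : i = j
      · subst hij
        rw [pcmp_of_mem_same P m.2, pcmp_of_mem_same P (P.d_mem m.2)]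
      · rw [pcmp_of_mem_ne P m.2 hij, pcmp_of_mem_ne P (P.d_mem m.2) (by omega), map_zero]
  | add x y hx hy => rw [map_add, pcmp_add, pcmp_add, hx, hy, map_add]

lemma pcmp_smul (P : DGMod A) {i : ℤ} {c : R} (hc : c ∈ 𝒜 i) (j : ℤ) (x : P.M) :
    pcmp P j (c • x) = c • pcmp P (j - i) x := by
  induction x using DirectSum.Decomposition.inductionOn P.grading with
  | zero => simp [pcmp_zero]
  | @homogeneous i' m =>
      by_cases hij : i' = j - i
      · subst hij
        rw [pcmp_of_mem_same P m.2,
          pcmp_of_mem_same P (show c • (m : P.M) ∈ P.grading j by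
            simpa [show i + (j - i) = j by omega] using P.smul_mem hc m.2)]
      · rw [pcmp_of_mem_ne P m.2 hij, smul_zero,
          pcmp_of_mem_ne P (P.smul_mem hc m.2) (by omega)]
  | add x y hx hy => rw [smul_add, pcmp_add, pcmp_add, hx, hy, smul_add]

/-- Extract a homogeneous primitive from vanishing cohomology. -/
lemma exists_primitive (P : DGMod A) {j : ℤ} (hj : ¬ P.HNonzeroAt j) {x : P.M}
    (hx : x ∈ P.grading j) (hdx : P.d x = 0) :
    ∃ y ∈ P.grading (j - 1), P.d y = x := by
  have h : ∃ p, P.d p = x := by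
    by_contra h
    exact hj ⟨x, hx, hdx, h⟩
  obtain ⟨p, hp⟩ := h
  refine ⟨pcmp P (j - 1) p, pcmp_mem _ _ _, ?_⟩
  rw [← pcmp_d, show j - 1 + 1 = j by omega, hp, pcmp_of_mem_same P hx]

end S3Aux

section Eps

variable {R : Type} [Ring R] (𝒜 : ℤ → AddSubgroup R) [GradedRing 𝒜]

/-- The Koszul sign operator `ε(c) = ∑ⱼ (-1)ʲ cⱼ` on a graded ring. -/
noncomputable def epsHom : R →+ R :=
  ((DirectSum.decomposeAddEquiv 𝒜).symm.toAddMonoidHom).comp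
    ((DFinsupp.mapRange.addMonoidHom
        (fun j => AddMonoidHom.mk' (fun c : 𝒜 j => (Int.negOnePow j : ℤ) • c)
          (fun a b => smul_add _ a b))).comp
      (DirectSum.decomposeAddEquiv 𝒜).toAddMonoidHom)

noncomputable def epsR (c : R) : R := epsHom 𝒜 c

lemma epsR_of_mem {j : ℤ} {c : R} (hc : c ∈ 𝒜 j) :
    epsR 𝒜 c = (Int.negOnePow j : ℤ) • c := by
  have hrw : epsR 𝒜 c = (DirectSum.decompose 𝒜).symm
      (DFinsupp.mapRange (fun j (c : 𝒜 j) => (Int.negOnePow j : ℤ) • c)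
        (fun _ => smul_zero _) (DirectSum.decompose 𝒜 c)) := rfl
  rw [hrw, DirectSum.decompose_coe 𝒜 (⟨c, hc⟩ : 𝒜 j)]
  erw [DFinsupp.mapRange_single]
  erw [DirectSum.decompose_symm_of 𝒜 ((Int.negOnePow j : ℤ) • (⟨c, hc⟩ : 𝒜 j))]
  rfl

lemma epsR_zero : epsR 𝒜 (0 : R) = 0 := map_zero (epsHom 𝒜)

lemma epsR_add (c c' : R) : epsR 𝒜 (c + c') = epsR 𝒜 c + epsR 𝒜 c' :=
  map_add (epsHom 𝒜) c c'

variable {𝒜}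

lemma epsR_mul {i : ℤ} {c : R} (hc : c ∈ 𝒜 i) (r : R) :
    epsR 𝒜 (c * r) = (Int.negOnePow i : ℤ) • (c * epsR 𝒜 r) := by
  induction r using DirectSum.Decomposition.inductionOn 𝒜 with
  | zero => rw [mul_zero, epsR_zero, mul_zero, smul_zero]
  | @homogeneous j m =>
      rw [epsR_of_mem 𝒜 m.2, epsR_of_mem 𝒜 (SetLike.mul_mem_graded hc m.2),
        Int.negOnePow_add, mul_smul_comm, smul_smul]
      push_cast
      ring_nf
  | add x y hx hy =>
      rw [mul_add, epsR_add, epsR_add, hx, hy, mul_add, smul_add]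

end Eps

section Coord

variable {R : Type} [Ring R] {𝒜 : ℤ → AddSubgroup R} [GradedRing 𝒜] {A : DGRing R 𝒜}
variable {P : DGMod A} (sb : SemiBasis P)

/-- `pcmp` as an additive homomorphism. -/
noncomputable def pcmpHom (P : DGMod A) (j : ℤ) : P.M →+ P.M :=
  AddMonoidHom.mk' (pcmp P j) (pcmp_add P j)

lemma coord_eq_zero_of_mem_span {Q : sb.ι → Prop} {x : P.M}
    (hx : x ∈ Submodule.span R (Set.range fun l : {l // Q l} => sb.b l.1))
    {k : sb.ι} (hk : ¬ Q k) : sb.b.repr x k = 0 := by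
  induction hx using Submodule.span_induction with
  | mem y hy =>
      obtain ⟨l, rfl⟩ := hy
      rw [Module.Basis.repr_self, Finsupp.single_eq_of_ne']
      intro h
      exact hk (h ▸ l.2)
  | zero => simp
  | add y z _ _ hy hz => rw [map_add, Finsupp.add_apply, hy, hz, add_zero]
  | smul c y _ hy => rw [map_smul, Finsupp.smul_apply, hy, smul_zero]

lemma pcmp_coeff_residue (k : sb.ι) (j : ℤ) (c : R) :
    pcmp P j ((c - (DirectSum.decompose 𝒜 c (j - sb.ndeg k) : R)) • sb.b k) = 0 := by
  induction c using DirectSum.Decomposition.inductionOn 𝒜 with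
  | zero => simp [pcmp_zero]
  | @homogeneous i m =>
      by_cases hij : i = j - sb.ndeg k
      · rw [← hij, DirectSum.decompose_of_mem_same 𝒜 m.2, sub_self, zero_smul, pcmp_zero]
      · rw [DirectSum.decompose_of_mem_ne 𝒜 m.2 hij]
        push_cast
        rw [sub_zero]
        exact pcmp_of_mem_ne P (P.smul_mem m.2 (sb.homog k)) (by omega)
  | add c c' hc hc' =>
      rw [DirectSum.decompose_add] at *
      have : (c + c' - ((DirectSum.decompose 𝒜 c + DirectSum.decompose 𝒜 c') (j - sb.ndeg k) : R))
          = (c - (DirectSum.decompose 𝒜 c (j - sb.ndeg k) : R))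
            + (c' - (DirectSum.decompose 𝒜 c' (j - sb.ndeg k) : R)) := by
        rw [DFinsupp.add_apply]
        push_cast
        abel
      rw [this, add_smul, pcmp_add, hc, hc', add_zero]

/-- Coordinates of a homogeneous element are homogeneous of complementary degree. -/
lemma coord_mem_of_grading {x : P.M} {j : ℤ} (hx : x ∈ P.grading j) (k : sb.ι) :
    sb.b.repr x k ∈ 𝒜 (j - sb.ndeg k) := by
  classical
  set c : sb.ι →₀ R := sb.b.repr x with hc
  set g : sb.ι →₀ R := Finsupp.onFinset c.support
    (fun k => (DirectSum.decompose 𝒜 (c k) (j - sb.ndeg k) : R))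
    (fun k h => Finsupp.mem_support_iff.mpr (fun h0 => h (by simp only []; rw [h0]; simp))) with hg
  set y : P.M := Finsupp.linearCombination R sb.b g with hy
  have hyg : sb.b.repr y = g := sb.b.repr_linearCombination g
  have hymem : y ∈ P.grading j := by
    rw [hy, Finsupp.linearCombination_apply]
    refine AddSubgroup.sum_mem _ (fun k hk => ?_)
    have : (g k : R) ∈ 𝒜 (j - sb.ndeg k) := by
      rw [hg]
      exact SetLike.coe_mem _
    simpa [show j - sb.ndeg k + sb.ndeg k = j by omega] using P.smul_mem this (sb.homog k)
  have hxy : x - y ∈ P.grading j := AddSubgroup.sub_mem _ hx hymem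
  have hzero : pcmp P j (x - y) = 0 := by
    have h1 : Finsupp.linearCombination R sb.b c = x := sb.b.linearCombination_repr x
    have hrepr : x - y = ((c - g).sum fun k r => r • sb.b k) := by
      rw [← Finsupp.linearCombination_apply, map_sub, h1, hy]
    rw [hrepr, Finsupp.sum, show pcmp P j = ⇑(pcmpHom P j) from rfl, map_sum]
    refine Finset.sum_eq_zero (fun k hk => ?_)
    have : ((c - g) k) = c k - (DirectSum.decompose 𝒜 (c k) (j - sb.ndeg k) : R) := by
      rw [Finsupp.sub_apply, hg, Finsupp.onFinset_apply]
    rw [this]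
    exact pcmp_coeff_residue sb k j (c k)
  rw [pcmp_of_mem_same P hxy] at hzero
  have hxeq : x = y := by
    have := sub_eq_zero.mp hzero
    exact this
  have hck : c k = g k := by rw [hc, hxeq, hyg]
  rw [hck, hg, Finsupp.onFinset_apply]
  exact SetLike.coe_mem _

/-- The span of the semibasis elements of degree `> i₀`. -/
noncomputable def highSpan (i₀ : ℤ) : Submodule R P.M :=
  Submodule.span R (Set.range fun k : {k : sb.ι // i₀ < sb.ndeg k} => sb.b k.1)

lemma mem_highSpan_of_coords {i₀ : ℤ} {x : P.M}
    (h : ∀ k, sb.ndeg k ≤ i₀ → sb.b.repr x k = 0) : x ∈ highSpan sb i₀ := by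
  have hx : x = ((sb.b.repr x).sum fun k r => r • sb.b k) := by
    rw [← Finsupp.linearCombination_apply, sb.b.linearCombination_repr]
  rw [hx, Finsupp.sum]
  refine Submodule.sum_mem _ (fun k hk => ?_)
  by_cases hdeg : i₀ < sb.ndeg k
  · exact Submodule.smul_mem _ _ (Submodule.subset_span ⟨⟨k, hdeg⟩, rfl⟩)
  · rw [h k (by omega), zero_smul]
    exact Submodule.zero_mem _
lemma mem_highSpan_of_grading (hA : ∀ i : ℤ, 0 < i → 𝒜 i = ⊥) {i₀ j : ℤ} {x : P.M}
    (hx : x ∈ P.grading j) (hj : i₀ < j) : x ∈ highSpan sb i₀ := by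
  refine mem_highSpan_of_coords sb (fun k hk => ?_)
  have := coord_mem_of_grading sb hx k
  rw [hA (j - sb.ndeg k) (by omega)] at this
  simpa using this

end Coord

section Homotopy

variable {R : Type} [Ring R] {𝒜 : ℤ → AddSubgroup R} [GradedRing 𝒜] {A : DGRing R 𝒜}
variable {P : DGMod A} (sb : SemiBasis P)

lemma negOnePow_smul_smul {β : Type*} [AddCommGroup β] (i : ℤ) (y : β) :
    (Int.negOnePow i : ℤ) • (Int.negOnePow i : ℤ) • y = y := by
  rw [smul_smul, show ((Int.negOnePow i : ℤ) * (Int.negOnePow i : ℤ))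
    = ((Int.negOnePow i * Int.negOnePow i : ℤˣ) : ℤ) from rfl, Int.units_mul_self]
  simp

/-- Koszul-signed `A`-linear extension of `t` on the semibasis. -/
noncomputable def sT (t : sb.ι → P.M) : P.M →+ P.M :=
  AddMonoidHom.mk' (fun x => (sb.b.repr x).sum fun k c => epsR 𝒜 c • t k)
    (fun x y => by
      rw [map_add]
      exact Finsupp.sum_add_index' (fun k => by rw [epsR_zero, zero_smul])
        (fun k c c' => by rw [epsR_add, add_smul]))

lemma sT_apply (t : sb.ι → P.M) (x : P.M) :
    sT sb t x = (sb.b.repr x).sum fun k c => epsR 𝒜 c • t k := rfl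

lemma sT_basis (t : sb.ι → P.M) (k : sb.ι) : sT sb t (sb.b k) = t k := by
  rw [sT_apply, Module.Basis.repr_self,
    Finsupp.sum_single_index (by rw [epsR_zero, zero_smul]),
    epsR_of_mem 𝒜 (SetLike.one_mem_graded 𝒜), Int.negOnePow_zero]
  simp

lemma sT_smul (t : sb.ι → P.M) {i : ℤ} {c : R} (hc : c ∈ 𝒜 i) (x : P.M) :
    sT sb t (c • x) = (Int.negOnePow i : ℤ) • (c • sT sb t x) := by
  rw [sT_apply, map_smul]
  rw [Finsupp.sum_of_support_subset _ Finsupp.support_smul _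
    (fun k _ => by rw [epsR_zero, zero_smul])]
  have hterm : ∀ k ∈ (sb.b.repr x).support,
      epsR 𝒜 ((c • sb.b.repr x) k) • t k
        = (Int.negOnePow i : ℤ) • (c • (epsR 𝒜 (sb.b.repr x k) • t k)) := by
    intro k _
    rw [Finsupp.smul_apply, smul_eq_mul, epsR_mul hc, smul_assoc, mul_smul]
  rw [Finset.sum_congr rfl hterm, ← Finset.smul_sum, ← Finset.smul_sum]
  rfl

lemma sT_mem_grading (t : sb.ι → P.M) (ht : ∀ k, t k ∈ P.grading (sb.ndeg k - 1))
    {j : ℤ} {x : P.M} (hx : x ∈ P.grading j) : sT sb t x ∈ P.grading (j - 1) := by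
  rw [sT_apply, Finsupp.sum]
  refine AddSubgroup.sum_mem _ (fun k _ => ?_)
  have h1 : epsR 𝒜 (sb.b.repr x k) ∈ 𝒜 (j - sb.ndeg k) := by
    rw [epsR_of_mem 𝒜 (coord_mem_of_grading sb hx k)]
    exact AddSubgroup.zsmul_mem _ (coord_mem_of_grading sb hx k) _
  simpa [show j - sb.ndeg k + (sb.ndeg k - 1) = j - 1 by omega]
    using P.smul_mem h1 (ht k)

/-- The candidate homotopy `d ∘ s + s ∘ d`. -/
noncomputable def hT (t : sb.ι → P.M) : P.M →+ P.M :=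
  P.d.comp (sT sb t) + (sT sb t).comp P.d

lemma hT_apply (t : sb.ι → P.M) (x : P.M) :
    hT sb t x = P.d (sT sb t x) + sT sb t (P.d x) := rfl

lemma hT_smul_homog (t : sb.ι → P.M) {i : ℤ} {c : R} (hc : c ∈ 𝒜 i) (x : P.M) :
    hT sb t (c • x) = c • hT sb t x := by
  have hdc : A.d c ∈ 𝒜 (i + 1) := A.d_mem hc
  rw [hT_apply, hT_apply, sT_smul sb t hc x, AddMonoidHom.map_zsmul,
    P.leibniz c (sT sb t x) hc, P.leibniz c x hc, map_add, AddMonoidHom.map_zsmul,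
    sT_smul sb t hdc x, sT_smul sb t hc (P.d x)]
  rw [smul_add, negOnePow_smul_smul, negOnePow_smul_smul, Int.negOnePow_succ]
  push_cast
  rw [neg_smul, smul_add]
  abel

lemma hT_smul (t : sb.ι → P.M) (c : R) (x : P.M) :
    hT sb t (c • x) = c • hT sb t x := by
  induction c using DirectSum.Decomposition.inductionOn 𝒜 with
  | zero => rw [zero_smul, map_zero, zero_smul]
  | @homogeneous i m => exact hT_smul_homog sb t m.2 x
  | add c c' hc hc' => rw [add_smul, map_add, hc, hc', add_smul]

open scoped Classical in
/-- The contracting values on semibasis elements, built by recursion on the filtration. -/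
noncomputable def sFun (k : sb.ι) : P.M :=
  if h : ∃ v, v ∈ P.grading (sb.ndeg k - 1) ∧ P.d v =
      sb.b k - (sb.b.repr (P.d (sb.b k))).support.attach.sum
        (fun l => epsR 𝒜 ((sb.b.repr (P.d (sb.b k))) l.1) • sFun l.1)
  then Classical.choose h else 0
termination_by sb.filt k
decreasing_by
  all_goals
    have hl := l.2
    by_contra hcon
    rw [Finsupp.mem_support_iff] at hl
    exact hl (coord_eq_zero_of_mem_span sb (sb.d_mem k) hcon)

lemma sT_sFun_eq_attach (k : sb.ι) :
    sT sb (sFun sb) (P.d (sb.b k)) = (sb.b.repr (P.d (sb.b k))).support.attach.sum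
      (fun l => epsR 𝒜 ((sb.b.repr (P.d (sb.b k))) l.1) • sFun sb l.1) := by
  rw [sT_apply, Finsupp.sum, ← Finset.sum_attach]

lemma sFun_spec (i₀ : ℤ) (hac : ∀ j, i₀ < j → ¬ P.HNonzeroAt j) :
    ∀ n : ℕ, ∀ k : sb.ι, sb.filt k < n → i₀ < sb.ndeg k →
      sFun sb k ∈ P.grading (sb.ndeg k - 1) ∧
        P.d (sFun sb k) = sb.b k - sT sb (sFun sb) (P.d (sb.b k)) := by
  intro n
  induction n with
  | zero => exact fun k hk _ => absurd hk (Nat.not_lt_zero _)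
  | succ n ih =>
      intro k hk hdeg
      have hdbk : P.d (sb.b k) ∈ P.grading (sb.ndeg k + 1) := P.d_mem (sb.homog k)
      have hsupp : ∀ l ∈ (sb.b.repr (P.d (sb.b k))).support,
          sb.filt l < sb.filt k ∧ i₀ < sb.ndeg l := by
        intro l hl
        rw [Finsupp.mem_support_iff] at hl
        constructor
        · by_contra hcon
          exact hl (coord_eq_zero_of_mem_span sb (sb.d_mem k) hcon)
        · by_contra hcon
          refine hl ?_
          have := coord_mem_of_grading sb hdbk l
          rw [A.nonpos (sb.ndeg k + 1 - sb.ndeg l) (by omega)] at this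
          simpa using this
      have hIH : ∀ l ∈ (sb.b.repr (P.d (sb.b k))).support,
          sFun sb l ∈ P.grading (sb.ndeg l - 1) ∧
            P.d (sFun sb l) = sb.b l - sT sb (sFun sb) (P.d (sb.b l)) := by
        intro l hl
        obtain ⟨h1, h2⟩ := hsupp l hl
        exact ih l (by omega) h2
      -- the element to integrate
      set r : P.M := sb.b k - sT sb (sFun sb) (P.d (sb.b k)) with hr
      have hrmem : r ∈ P.grading (sb.ndeg k) := by
        refine AddSubgroup.sub_mem _ (sb.homog k) ?_
        rw [sT_apply, Finsupp.sum]
        refine AddSubgroup.sum_mem _ (fun l hl => ?_)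
        have h1 : epsR 𝒜 (sb.b.repr (P.d (sb.b k)) l) ∈ 𝒜 (sb.ndeg k + 1 - sb.ndeg l) := by
          rw [epsR_of_mem 𝒜 (coord_mem_of_grading sb hdbk l)]
          exact AddSubgroup.zsmul_mem _ (coord_mem_of_grading sb hdbk l) _
        simpa [show sb.ndeg k + 1 - sb.ndeg l + (sb.ndeg l - 1) = sb.ndeg k by omega]
          using P.smul_mem h1 ((hIH l hl).1)
      have hHbl : ∀ l ∈ (sb.b.repr (P.d (sb.b k))).support, hT sb (sFun sb) (sb.b l) = sb.b l := by
        intro l hl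
        rw [hT_apply, sT_basis, (hIH l hl).2]
        abel
      have hHdb : hT sb (sFun sb) (P.d (sb.b k)) = P.d (sb.b k) := by
        have hrepr : P.d (sb.b k)
            = ∑ l ∈ (sb.b.repr (P.d (sb.b k))).support, sb.b.repr (P.d (sb.b k)) l • sb.b l := by
          conv_lhs => rw [← sb.b.linearCombination_repr (P.d (sb.b k))]
          rw [Finsupp.linearCombination_apply, Finsupp.sum]
        conv_lhs => rw [hrepr]
        rw [map_sum]
        rw [Finset.sum_congr rfl (fun l hl => by rw [hT_smul, hHbl l hl])]
        exact hrepr.symm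
      have hdr : P.d r = 0 := by
        have : P.d (sT sb (sFun sb) (P.d (sb.b k))) = P.d (sb.b k) := by
          have := hT_apply sb (sFun sb) (P.d (sb.b k))
          rw [hHdb] at this
          rw [show P.d (P.d (sb.b k)) = 0 from P.d_sq _, map_zero, add_zero] at this
          exact this.symm
        rw [hr, map_sub, this, sub_self]
      have hex : ∃ v, v ∈ P.grading (sb.ndeg k - 1) ∧ P.d v = r :=
        exists_primitive P (hac _ hdeg) hrmem hdr
      have hex' : ∃ v, v ∈ P.grading (sb.ndeg k - 1) ∧ P.d v =
          sb.b k - (sb.b.repr (P.d (sb.b k))).support.attach.sum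
            (fun l => epsR 𝒜 ((sb.b.repr (P.d (sb.b k))) l.1) • sFun sb l.1) := by
        rw [← sT_sFun_eq_attach]
        exact hex
      have huf : sFun sb k = Classical.choose hex' := by
        rw [sFun]
        rw [dif_pos hex']
      have hsp := Classical.choose_spec hex'
      rw [← huf, ← sT_sFun_eq_attach] at hsp
      exact hsp

lemma hT_eq_on_high (i₀ : ℤ) (hac : ∀ j, i₀ < j → ¬ P.HNonzeroAt j)
    {x : P.M} (hx : x ∈ highSpan sb i₀) : hT sb (sFun sb) x = x := by
  induction hx using Submodule.span_induction with
  | mem y hy =>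
      obtain ⟨⟨k, hk⟩, rfl⟩ := hy
      have := sFun_spec sb i₀ hac (sb.filt k + 1) k (by omega) hk
      rw [hT_apply, sT_basis, this.2]
      abel
  | zero => exact map_zero _
  | add y z _ _ hy hz => rw [map_add, hy, hz]
  | smul c y _ hy => rw [hT_smul, hy]

/-- Any cocycle in the span of the high-degree semibasis elements is a boundary. -/
lemma high_cocycle_is_boundary (i₀ : ℤ) (hac : ∀ j, i₀ < j → ¬ P.HNonzeroAt j)
    {w : P.M} (hw : w ∈ highSpan sb i₀) (hdw : P.d w = 0) : ∃ v, P.d v = w := by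
  refine ⟨sT sb (sFun sb) w, ?_⟩
  have := hT_eq_on_high sb i₀ hac hw
  rw [hT_apply, hdw, map_zero, add_zero] at this
  exact this

end Homotopy

section Reduction

variable {R : Type} [Ring R] {𝒜 : ℤ → AddSubgroup R} [GradedRing 𝒜] {A : DGRing R 𝒜}
variable {P : DGMod A} (sb : SemiBasis P)

/-- Elements of the form (high-degree span) + boundary. -/
def bplus (i₀ : ℤ) : AddSubgroup P.M where
  carrier := {x | ∃ w ∈ highSpan sb i₀, ∃ q, x = w + P.d q}
  zero_mem' := ⟨0, Submodule.zero_mem _, 0, by rw [map_zero, add_zero]⟩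
  add_mem' := by
    rintro x y ⟨w, hw, q, rfl⟩ ⟨w', hw', q', rfl⟩
    exact ⟨w + w', Submodule.add_mem _ hw hw', q + q', by rw [map_add]; abel⟩
  neg_mem' := by
    rintro x ⟨w, hw, q, rfl⟩
    exact ⟨-w, Submodule.neg_mem _ hw, -q, by rw [map_neg]; abel⟩

lemma mem_bplus {i₀ : ℤ} {x : P.M} :
    x ∈ bplus sb i₀ ↔ ∃ w ∈ highSpan sb i₀, ∃ q, x = w + P.d q := Iff.rfl

/-- Generators of the augmentation submodule: negative-degree multiples and
multiples by boundaries of degree `-1` elements. -/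
def augGens (A : DGRing R 𝒜) (P : DGMod A) : Set P.M :=
  {y | ∃ j : ℤ, j < 0 ∧ ∃ c ∈ 𝒜 j, ∃ m : P.M, y = c • m} ∪
    {y | ∃ q ∈ 𝒜 (-1 : ℤ), ∃ m : P.M, y = (A.d q) • m}

lemma augGens_smul (hA : ∀ i : ℤ, 0 < i → 𝒜 i = ⊥) (c : R) {y : P.M}
    (hy : y ∈ AddSubgroup.closure (augGens A P)) :
    c • y ∈ AddSubgroup.closure (augGens A P) := by
  induction c using DirectSum.Decomposition.inductionOn 𝒜 with
  | zero => rw [zero_smul]; exact AddSubgroup.zero_mem _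
  | @homogeneous i cc =>
      induction hy using AddSubgroup.closure_induction with
      | mem z hz =>
          rcases hz with ⟨j, hj, c', hc', m, rfl⟩ | ⟨q, hq, m, rfl⟩
          · rw [smul_smul]
            rcases lt_or_ge 0 i with hi | hi
            · have h0 : (cc : R) ∈ (⊥ : AddSubgroup R) := by
                rw [← hA i hi]; exact cc.2
              rw [AddSubgroup.mem_bot] at h0
              rw [h0, zero_mul, zero_smul]
              exact AddSubgroup.zero_mem _
            · refine AddSubgroup.subset_closure (Or.inl ⟨i + j, by omega, cc * c',
                SetLike.mul_mem_graded cc.2 hc', m, rfl⟩)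
          · rw [smul_smul]
            rcases lt_trichotomy i 0 with hi | hi | hi
            · refine AddSubgroup.subset_closure (Or.inl ⟨i, hi, cc * A.d q,
                (by simpa using SetLike.mul_mem_graded cc.2 (A.d_mem hq) :
                  (cc : R) * A.d q ∈ 𝒜 i), m, rfl⟩)
            · subst hi
              have hdc : A.d (cc : R) = 0 := by
                have h0 : A.d (cc : R) ∈ (⊥ : AddSubgroup R) := by
                  rw [← hA 1 one_pos]
                  simpa using A.d_mem cc.2
                rwa [AddSubgroup.mem_bot] at h0
              have hlb := A.leibniz (cc : R) q cc.2
              rw [hdc, zero_mul, zero_add, Int.negOnePow_zero] at hlb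
              have hcq : (cc : R) * A.d q = A.d ((cc : R) * q) := by
                rw [hlb]; simp
              rw [hcq]
              refine AddSubgroup.subset_closure (Or.inr ⟨(cc : R) * q,
                (by simpa using SetLike.mul_mem_graded cc.2 hq :
                  (cc : R) * q ∈ 𝒜 (-1 : ℤ)), m, rfl⟩)
            · have h0 : (cc : R) ∈ (⊥ : AddSubgroup R) := by
                rw [← hA i hi]; exact cc.2
              rw [AddSubgroup.mem_bot] at h0
              rw [h0, zero_mul, zero_smul]
              exact AddSubgroup.zero_mem _
      | zero => rw [smul_zero]; exact AddSubgroup.zero_mem _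
      | add y z _ _ hy hz => rw [smul_add]; exact AddSubgroup.add_mem _ hy hz
      | neg y _ hy => rw [smul_neg]; exact AddSubgroup.neg_mem _ hy
  | add c c' hc hc' => rw [add_smul]; exact AddSubgroup.add_mem _ hc hc'

lemma kspan_subset_augClosure (hA : ∀ i : ℤ, 0 < i → 𝒜 i = ⊥) {x : P.M}
    (hx : x ∈ Submodule.span R {y | ∃ a ∈ augSet A, ∃ m : P.M, y = a • m}) :
    x ∈ AddSubgroup.closure (augGens A P) := by
  induction hx using Submodule.span_induction with
  | mem y hy =>
      obtain ⟨a, ha, m, rfl⟩ := hy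
      rcases ha with ⟨j, hj, haj⟩ | ⟨b, hb, hdb⟩
      · exact AddSubgroup.subset_closure (Or.inl ⟨j, hj, a, haj, m, rfl⟩)
      · exact AddSubgroup.subset_closure (Or.inr ⟨b, hb, m, hdb ▸ rfl⟩)
  | zero => exact AddSubgroup.zero_mem _
  | add y z _ _ hy hz => exact AddSubgroup.add_mem _ hy hz
  | smul c y _ hy => exact augGens_smul hA c hy

lemma augClosure_pcmp (hA : ∀ i : ℤ, 0 < i → 𝒜 i = ⊥) (i₀ : ℤ) {y : P.M}
    (hy : y ∈ AddSubgroup.closure (augGens A P)) :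
    pcmp P i₀ y ∈ bplus sb i₀ := by
  induction hy using AddSubgroup.closure_induction with
  | mem z hz =>
      rcases hz with ⟨j, hj, c, hc, m, rfl⟩ | ⟨q, hq, m, rfl⟩
      · rw [pcmp_smul P hc]
        refine (mem_bplus sb).mpr ⟨c • pcmp P (i₀ - j) m, ?_, 0, by rw [map_zero, add_zero]⟩
        have hlt : i₀ < i₀ - j := by omega
        exact Submodule.smul_mem _ _
          (mem_highSpan_of_grading sb hA (pcmp_mem P (i₀ - j) m) hlt)
      · have hdq : A.d q ∈ 𝒜 (0 : ℤ) := by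
          have := A.d_mem hq
          simpa using this
        rw [pcmp_smul P hdq]
        set v := pcmp P (i₀ - 0) m with hv
        have hvmem : v ∈ P.grading i₀ := by
          rw [hv, show i₀ - 0 = i₀ by omega]
          exact pcmp_mem P i₀ m
        have hlb := P.leibniz q v hq
        have hneg : ((Int.negOnePow (-1 : ℤ) : ℤˣ) : ℤ) = -1 := by
          rw [show (-1 : ℤ) = -(1 : ℤ) by norm_num, Int.negOnePow_neg, Int.negOnePow_one]
          simp
        rw [hneg] at hlb
        have hsplit : A.d q • v = q • P.d v + P.d (q • v) := by
          rw [hlb]; simp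
        rw [hsplit]
        refine (mem_bplus sb).mpr ⟨q • P.d v, ?_, q • v, rfl⟩
        have hlt : i₀ < i₀ + 1 := by omega
        exact Submodule.smul_mem _ _
          (mem_highSpan_of_grading sb hA (P.d_mem hvmem) hlt)
  | zero => rw [pcmp_zero]; exact AddSubgroup.zero_mem _
  | add y z _ _ hy hz => rw [pcmp_add]; exact AddSubgroup.add_mem _ hy hz
  | neg y _ hy => rw [pcmp_neg]; exact AddSubgroup.neg_mem _ hy

end Reduction

lemma dgfn_comm {R : Type} [Ring R] {𝒜 : ℤ → AddSubgroup R} [GradedRing 𝒜]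
    {A : DGRing R 𝒜} {M N : DGMod A} (f : M ⟶ N) (m : M.M) :
    dgfn f (M.d m) = N.d (dgfn f m) := DGHom.comm_d f m

lemma dgfn_comm_rest {R S : Type} [Ring R] [Ring S] {𝒜 : ℤ → AddSubgroup R}
    {𝓑 : ℤ → AddSubgroup S} [GradedRing 𝒜] [GradedRing 𝓑] {A : DGRing R 𝒜}
    {B : DGRing S 𝓑} {π : DGRingHom A B} {P : DGMod A} {N : DGMod B}
    (φ : P ⟶ π.rest N) (m : P.M) :
    dgfn φ (P.d m) = N.d (dgfn φ m) := DGHom.comm_d φ m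


section Statement3

variable {R : Type} [Ring R] {𝒜 : ℤ → AddSubgroup R} [GradedRing 𝒜]
variable {S : Type} [Ring S] {𝓑 : ℤ → AddSubgroup S} [GradedRing 𝓑]

/-- Proposition 3.1 of the paper.  Let `A` be a nonpositive DG ring with
reduction `π : A → Ā = H⁰(A)`.  The derived reduction functor
`M ↦ Ā ⊗^L_A M : D⁻(A) → D⁻(Ā)` is conservative: if `M` has bounded above cohomology and
`Ā ⊗^L_A M ≅ 0` (computed via a semi-free resolution `P → M` of `M`), then `M ≅ 0`
in `D(A)`, i.e. `M` is acyclic. -/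
theorem statement3 (A : DGRing R 𝒜) (Abar : DGRing S 𝓑) (π : DGRingHom A Abar)
    (hπ : IsReduction π)
    (M : DGMod A) (hM : M.CohBoundedAbove)
    (P : DGMod A) (f : P ⟶ M) (hsf : IsSemiFree P) (hq : qiso f)
    (N : DGMod Abar) (φ : P ⟶ π.rest N) (hred : IsReductionMod π P N φ)
    (hz : N.HZero) : M.HZero := by
  classical
  obtain ⟨sb⟩ := hsf
  -- Step 0a: nonzero cohomology of `P` gives nonzero cohomology of `M`
  have hPM : ∀ i, P.HNonzeroAt i → M.HNonzeroAt i := by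
    rintro i ⟨m, hm, hdm, hnb⟩
    refine ⟨dgfn f m, f.deg_mem hm, ?_, ?_⟩
    · rw [← dgfn_comm f, hdm, map_zero]
    · rintro ⟨p, hp⟩
      obtain ⟨qq, hqq⟩ := hq.2 i m hm hdm ⟨p, hp.symm⟩
      exact hnb ⟨qq, hqq⟩
  -- Step 1: `P` is acyclic
  have hPz : P.HZero := by
    by_contra hnz
    rw [DGMod.HZero] at hnz
    push_neg at hnz
    obtain ⟨i, hi⟩ := hnz
    obtain ⟨n₀, hn₀⟩ := hM
    obtain ⟨i₀, hi₀, hmax⟩ := Int.exists_greatest_of_bdd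
      (P := fun i => P.HNonzeroAt i) ⟨n₀, fun z hz' => hn₀ z (hPM z hz')⟩ ⟨i, hi⟩
    have hac : ∀ j, i₀ < j → ¬ P.HNonzeroAt j := fun j hj hcon => by
      have := hmax j hcon; omega
    obtain ⟨m, hm, hdm, hnb⟩ := hi₀
    -- the image cocycle in N and a primitive for it
    have hφm : dgfn φ m ∈ N.grading i₀ := φ.deg_mem hm
    have hdφm : N.d (dgfn φ m) = 0 := by
      have := dgfn_comm_rest φ m
      rw [hdm, map_zero] at this
      exact this.symm
    have hyN : ∃ y, N.d y = dgfn φ m := by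
      by_contra hcon
      exact hz i₀ ⟨dgfn φ m, hφm, hdφm, hcon⟩
    obtain ⟨y, hy⟩ := hyN
    have hy' : N.d (pcmp N (i₀ - 1) y) = dgfn φ m := by
      have := pcmp_d N (i₀ - 1) y
      rw [show i₀ - 1 + 1 = i₀ by omega, hy, pcmp_of_mem_same N hφm] at this
      exact this.symm
    obtain ⟨p, hp, hφp⟩ := hred.1 (i₀ - 1) (pcmp N (i₀ - 1) y) (pcmp_mem N (i₀ - 1) y)
    -- m - d p is in the augmentation span
    have hφmdp : dgfn φ (m - P.d p) = 0 := by
      rw [map_sub]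
      have : dgfn φ (P.d p) = dgfn φ m := by
        rw [dgfn_comm_rest φ p, hφp, hy']
      rw [this, sub_self]
    have hK : m - P.d p ∈
        Submodule.span R {y | ∃ a ∈ augSet A, ∃ mm : P.M, y = a • mm} :=
      (hred.2 _).mp hφmdp
    have hgrad : m - P.d p ∈ P.grading i₀ := by
      refine AddSubgroup.sub_mem _ hm ?_
      have := P.d_mem hp
      rwa [show i₀ - 1 + 1 = i₀ by omega] at this
    have hcmp : pcmp P i₀ (m - P.d p) ∈ bplus sb i₀ :=
      augClosure_pcmp sb A.nonpos i₀ (kspan_subset_augClosure A.nonpos hK)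
    rw [pcmp_of_mem_same P hgrad] at hcmp
    obtain ⟨w, hw, q, heq⟩ := (mem_bplus sb).mp hcmp
    have hdw : P.d w = 0 := by
      have hweq : w = m - P.d p - P.d q := by rw [heq]; abel
      rw [hweq, map_sub, map_sub, hdm, P.d_sq, P.d_sq]
      abel
    obtain ⟨v, hv⟩ := high_cocycle_is_boundary sb i₀ hac hw hdw
    refine hnb ⟨v + p + q, ?_⟩
    rw [map_add, map_add, hv]
    have : m = w + P.d q + P.d p := by
      have : m - P.d p = w + P.d q := heq
      have h2 := congrArg (fun z => z + P.d p) this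
      simpa using h2
    rw [this]
    abel
  -- Step 2: conclude that `M` is acyclic
  intro i hMnz
  obtain ⟨nn, hn, hdn, hnb⟩ := hMnz
  obtain ⟨mm, hmm, hdmm, p, hpe⟩ := hq.1 i nn hn hdn
  have hmmb : ∃ qq, P.d qq = mm := by
    by_contra hcon
    exact hPz i ⟨mm, hmm, hdmm, hcon⟩
  obtain ⟨qq, hqq⟩ := hmmb
  refine hnb ⟨p + dgfn f qq, ?_⟩
  have h1 : dgfn f mm = M.d (dgfn f qq) := by rw [← hqq, dgfn_comm f]
  rw [map_add, ← h1]
  have : nn = M.d p + dgfn f mm := by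
    have h2 := congrArg (fun z => z + dgfn f mm) hpe
    simpa using h2
  rw [this]


end Statement3
end

section
/- Let A be a commutative (strongly commutative nonpositive) DG ring and S a multiplicatively closed subset of Ā = H⁰(A). Let A_S := A⁰_S ⊗_{A⁰} A where A⁰_S is the localization of A⁰ at the preimage of S. Then there is a unique isomorphism of graded H(A)-rings H(A_S) ≅ H(A)_S := Ā_S ⊗_Ā H(A), and for any DG A-module M a unique isomorphism of graded H(A_S)-modules H(A_S ⊗_A M) ≅ H(A)_S ⊗_{H(A)} H(M) compatible with the maps from H(M). -/
/-!
Common framework: nonpositive differential graded rings (DG rings), DG modules,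
the category of DG modules, quasi-isomorphisms and derived categories
(presented as localizations at quasi-isomorphisms), semi-free DG modules, etc.
-/

open CategoryTheory CategoryTheory.Limits MonoidalCategory

section Statement6

set_option maxHeartbeats 1000000 in
set_option synthInstance.maxHeartbeats 400000 in
/-- Auxiliary: the degree-`i` component of `d x` is `d` of the degree-`(i-1)` component. -/
private lemma d_comp_decompose {M : Type} [AddCommGroup M] (g : ℤ → AddSubgroup M)
    [DirectSum.Decomposition g] (d : M →+ M)
    (hd : ∀ {j : ℤ} {x : M}, x ∈ g j → d x ∈ g (j + 1)) (x : M) (i : ℤ) :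
    (DirectSum.decompose g (d x) i : M) = d (DirectSum.decompose g x (i - 1) : M) := by
  induction x using DirectSum.Decomposition.inductionOn g with
  | zero => simp
  | @homogeneous j m =>
      by_cases h : j + 1 = i
      · subst h
        rw [DirectSum.decompose_of_mem_same g (hd m.2)]
        have hj : j + 1 - 1 = j := by ring
        rw [hj, DirectSum.decompose_of_mem_same g m.2]
      · rw [DirectSum.decompose_of_mem_ne g (hd m.2) h,
          DirectSum.decompose_of_mem_ne g m.2 (fun hj => h (by omega)), map_zero]
  | add x y hx hy =>
      simp only [map_add, DirectSum.decompose_add, DirectSum.add_apply,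
        AddSubgroup.coe_add, hx, hy]

variable {R : Type} [Ring R] {𝒜 : ℤ → AddSubgroup R} [GradedRing 𝒜]
variable {S : Type} [Ring S] {𝓑 : ℤ → AddSubgroup S} [GradedRing 𝓑]

variable {A : DGRing R 𝒜} {B : DGRing S 𝓑}

private lemma restFn_smul {P : DGMod A} {N : DGMod B} (f : DGRingHom A B)
    (φ : P ⟶ f.rest N) (r : R) (x : P.M) :
    restFn f φ (r • x) = f.toRingHom r • restFn f φ x :=
  (dgfn φ).map_smul r x

private lemma restFn_d {P : DGMod A} {N : DGMod B} (f : DGRingHom A B)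
    (φ : P ⟶ f.rest N) (x : P.M) :
    restFn f φ (P.d x) = N.d (restFn f φ x) :=
  DGHom.comm_d φ x

private lemma restFn_sub {P : DGMod A} {N : DGMod B} (f : DGRingHom A B)
    (φ : P ⟶ f.rest N) (x y : P.M) :
    restFn f φ (x - y) = restFn f φ x - restFn f φ y :=
  map_sub (dgfn φ) x y

private lemma restFn_mem {P : DGMod A} {N : DGMod B} (f : DGRingHom A B)
    (φ : P ⟶ f.rest N) {i : ℤ} {x : P.M} (h : x ∈ P.grading i) :
    restFn f φ x ∈ N.grading i :=
  DGHom.deg_mem φ h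

/-- Proposition 4.4 of the paper.  Let `A` be a commutative DG ring,
`S̄` a multiplicatively closed subset of `Ā = H⁰(A)`, with preimage
`T = π⁻¹(S̄) ∩ A⁰ ⊆ A⁰` (a multiplicatively closed set of degree-`0` elements, saturated
modulo boundaries).  Let `f : A → A_S` be the corresponding localization of DG rings.
Then, in each degree:
(1) `H(A_S) ≅ H(A)_S` canonically and uniquely (as graded `H(A)`-rings): every cocycle of
`A_S` agrees, up to a denominator in `T` and a boundary, with the image of a cocycle of
`A`, and a cocycle of `A` whose image is a boundary is annihilated by `T` modulo
boundaries; and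
(2) the analogous statements hold for the localization `A_S ⊗_A M` of any DG `A`-module
`M`, compatibly with the maps from `H(M)`. -/
theorem statement6 (A : DGRing R 𝒜) (hA : IsCommDGRing A)
    (B : DGRing S 𝓑) (hB : IsCommDGRing B)
    (T : Set R)
    (hT0 : ∀ t ∈ T, t ∈ 𝒜 0) (hT1 : (1 : R) ∈ T)
    (hTmul : ∀ t ∈ T, ∀ t' ∈ T, t * t' ∈ T)
    (hTsat : ∀ t ∈ T, ∀ t' ∈ 𝒜 0, (∃ p, t - t' = A.d p) → t' ∈ T)
    (f : DGRingHom A B) (hloc : IsDGLocalization f T) :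
    -- (1) `H(A_S) ≅ H(A)_S` as graded `H(A)`-rings:
    ((∀ i : ℤ, ∀ b ∈ 𝓑 i, B.d b = 0 →
        ∃ a ∈ 𝒜 i, A.d a = 0 ∧ ∃ t ∈ T, ∃ p, f.toRingHom t * b - f.toRingHom a = B.d p) ∧
      (∀ i : ℤ, ∀ a ∈ 𝒜 i, A.d a = 0 → (∃ p, f.toRingHom a = B.d p) →
        ∃ t ∈ T, ∃ q, t * a = A.d q)) ∧
    -- (2) `H(A_S ⊗_A M) ≅ H(A)_S ⊗_{H(A)} H(M)`, compatibly with the map from `H(M)`: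
    (∀ (M : DGMod A) (M' : DGMod B) (φ : M ⟶ f.rest M'), IsLocalizedDGMod f T φ →
      (∀ i : ℤ, ∀ x ∈ M'.grading i, M'.d x = 0 →
        ∃ m ∈ M.grading i, M.d m = 0 ∧
          ∃ t ∈ T, ∃ p, f.toRingHom t • x - restFn f φ m = M'.d p) ∧
      (∀ i : ℤ, ∀ m ∈ M.grading i, M.d m = 0 → (∃ p, restFn f φ m = M'.d p) →
        ∃ t ∈ T, ∃ q, t • m = M.d q)) := by
  -- every element of `T` is a degree-0 cocycle
  have hdT : ∀ t ∈ T, A.d t = 0 := by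
    intro t ht
    have h1 := A.d_mem (hT0 t ht)
    rw [zero_add, A.nonpos 1 one_pos, AddSubgroup.mem_bot] at h1
    exact h1
  have hdft : ∀ t ∈ T, B.d (f.toRingHom t) = 0 := by
    intro t ht
    rw [← f.comm_d, hdT t ht, map_zero]
  refine ⟨⟨?_, ?_⟩, ?_⟩
  · -- (1) surjectivity on cohomology
    intro i b hb hdb
    obtain ⟨a, ha, t, ht, hta⟩ := hloc.2.1 i b hb
    have hfa : f.toRingHom (A.d a) = 0 := by
      rw [f.comm_d, ← hta, B.leibniz _ _ (f.deg_mem (hT0 t ht)), hdft t ht, hdb]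
      simp
    obtain ⟨t', ht', htt'⟩ := hloc.2.2 _ hfa
    refine ⟨t' * a, (zero_add i) ▸ SetLike.mul_mem_graded (hT0 t' ht') ha, ?_,
      t' * t, hTmul t' ht' t ht, 0, ?_⟩
    · rw [A.leibniz t' a (hT0 t' ht'), hdT t' ht', htt']
      simp
    · rw [map_mul, map_mul, mul_assoc, hta, sub_self, map_zero]
  · -- (1) injectivity on cohomology
    rintro i a ha hda ⟨p, hp⟩
    set p1 : S := (DirectSum.decompose 𝓑 p (i - 1) : S) with hp1
    have hp1mem : p1 ∈ 𝓑 (i - 1) := SetLike.coe_mem _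
    have hdp1 : B.d p1 = f.toRingHom a := by
      rw [hp1, ← d_comp_decompose 𝓑 B.d (fun h => B.d_mem h) p i, ← hp,
        DirectSum.decompose_of_mem_same 𝓑 (f.deg_mem ha)]
    obtain ⟨c, hc, t, ht, htc⟩ := hloc.2.1 (i - 1) p1 hp1mem
    have hkey : f.toRingHom (t * a - A.d c) = 0 := by
      have hcalc : f.toRingHom t * f.toRingHom a = f.toRingHom (A.d c) :=
        calc f.toRingHom t * f.toRingHom a = f.toRingHom t * B.d p1 := by rw [hdp1]
          _ = B.d (f.toRingHom t * p1) := by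
              rw [B.leibniz _ _ (f.deg_mem (hT0 t ht)), hdft t ht]; simp
          _ = B.d (f.toRingHom c) := by rw [htc]
          _ = f.toRingHom (A.d c) := (f.comm_d c).symm
      rw [map_sub, map_mul, hcalc, sub_self]
    obtain ⟨t', ht', h0⟩ := hloc.2.2 _ hkey
    rw [mul_sub, sub_eq_zero] at h0
    refine ⟨t' * t, hTmul t' ht' t ht, t' * c, ?_⟩
    calc (t' * t) * a = t' * (t * a) := mul_assoc _ _ _
      _ = t' * A.d c := h0
      _ = A.d (t' * c) := by rw [A.leibniz t' c (hT0 t' ht'), hdT t' ht']; simp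
  · -- (2) the module statement
    intro M M' φ hφ
    have hφ1 : ∀ i : ℤ, ∀ x ∈ M'.grading i, ∃ p ∈ M.grading i, ∃ t ∈ T,
        f.toRingHom t • x = restFn f φ p := hφ.1
    have hφ2 : ∀ p : M.M, restFn f φ p = 0 → ∃ t ∈ T, t • p = 0 := fun p h => hφ.2 p h
    constructor
    · intro i x hx hdx
      obtain ⟨m, hm, t, ht, htm⟩ := hφ1 i x hx
      have h0 : restFn f φ (M.d m) = 0 := by
        rw [restFn_d, ← htm, M'.leibniz _ x (f.deg_mem (hT0 t ht)), hdft t ht, hdx]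
        simp
      obtain ⟨t', ht', ht'm⟩ := hφ2 _ h0
      refine ⟨t' • m, (zero_add i) ▸ M.smul_mem (hT0 t' ht') hm, ?_,
        t' * t, hTmul t' ht' t ht, 0, ?_⟩
      · rw [M.leibniz t' m (hT0 t' ht'), hdT t' ht', ht'm]
        simp
      · rw [restFn_smul, map_mul, mul_smul, htm, sub_self, map_zero]
    · rintro i m hm hdm ⟨p, hp⟩
      have hφm : restFn f φ m ∈ M'.grading i := restFn_mem f φ hm
      set p1 : M'.M := (DirectSum.decompose M'.grading p (i - 1) : M'.M) with hp1
      have hp1mem : p1 ∈ M'.grading (i - 1) := SetLike.coe_mem _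
      have hdp1 : M'.d p1 = restFn f φ m := by
        rw [hp1, ← d_comp_decompose M'.grading M'.d (fun h => M'.d_mem h) p i, ← hp]
        exact DirectSum.decompose_of_mem_same M'.grading hφm
      obtain ⟨c, hc, t, ht, htc⟩ := hφ1 (i - 1) p1 hp1mem
      have hkey : restFn f φ (t • m - M.d c) = 0 := by
        have h1 : f.toRingHom t • restFn f φ m = restFn f φ (M.d c) :=
          calc f.toRingHom t • restFn f φ m = f.toRingHom t • M'.d p1 := by rw [hdp1]
            _ = M'.d (f.toRingHom t • p1) := by
                rw [M'.leibniz _ p1 (f.deg_mem (hT0 t ht)), hdft t ht]; simp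
            _ = M'.d (restFn f φ c) := by rw [htc]
            _ = restFn f φ (M.d c) := (restFn_d f φ c).symm
        rw [restFn_sub, restFn_smul, h1, sub_self]
      obtain ⟨t', ht', h0⟩ := hφ2 _ hkey
      rw [smul_sub, sub_eq_zero] at h0
      refine ⟨t' * t, hTmul t' ht' t ht, t' • c, ?_⟩
      calc (t' * t) • m = t' • (t • m) := mul_smul _ _ _
        _ = t' • M.d c := h0
        _ = M.d (t' • c) := by rw [M.leibniz t' c (hT0 t' ht'), hdT t' ht']; simp

end Statement6
end

section
/- Let A be a commutative DG ring and (e₁,...,eₙ) an idempotent covering sequence of Ā = H⁰(A). Then the DG ring homomorphism λ = (λ₁,...,λₙ) : A → A₁ × ⋯ × Aₙ, where Aᵢ := A_{eᵢ} is the localization of A at eᵢ, is a quasi-isomorphism. -/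
/-!
Common framework: nonpositive differential graded rings (DG rings), DG modules,
the category of DG modules, quasi-isomorphisms and derived categories
(presented as localizations at quasi-isomorphisms), semi-free DG modules, etc.
-/

open CategoryTheory CategoryTheory.Limits MonoidalCategory

section AuxHelpers
variable {S : Type} [Ring S] {𝓑 : ℤ → AddSubgroup S} [GradedRing 𝓑]
variable (B : DGRing S 𝓑)

lemma aux_deg0_d {a : S} (h : a ∈ 𝓑 0) : B.d a = 0 := by
  have h1 := B.d_mem h
  rw [B.nonpos (0+1) (by norm_num)] at h1
  simpa using h1

lemma aux_d_mul_deg0 {a : S} (h : a ∈ 𝓑 0) (b : S) : B.d (a * b) = a * B.d b := by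
  have := B.leibniz a b h
  simpa [aux_deg0_d B h] using this

lemma aux_d_mul_cocycle (q : S) {b : S} (hb : B.d b = 0) : B.d (q * b) = B.d q * b := by
  induction q using DirectSum.Decomposition.inductionOn 𝓑 with
  | zero => simp
  | homogeneous m => rw [B.leibniz _ b m.2]; simp [hb]
  | add x y hx hy => rw [add_mul, map_add, hx, hy, map_add, add_mul]

lemma aux_pow_mem {e : S} (h : e ∈ 𝓑 0) (m : ℕ) : e ^ m ∈ 𝓑 0 := by
  induction m with
  | zero => simpa using SetLike.one_mem_graded 𝓑
  | succ k ih => have := SetLike.mul_mem_graded ih h; rw [pow_succ]; simpa using this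

lemma aux_decompose_d (p : S) (i : ℤ) :
    (DirectSum.decompose 𝓑 (B.d p) i : S) = B.d (DirectSum.decompose 𝓑 p (i - 1) : S) := by
  induction p using DirectSum.Decomposition.inductionOn 𝓑 with
  | zero => simp
  | homogeneous m =>
    obtain ⟨m, hm⟩ := m
    rename_i j
    by_cases hij : i = j + 1
    · subst hij
      rw [DirectSum.decompose_of_mem_same 𝓑 (B.d_mem hm)]
      rw [show j + 1 - 1 = j by ring, DirectSum.decompose_of_mem_same 𝓑 hm]
    · rw [DirectSum.decompose_of_mem_ne 𝓑 (B.d_mem hm) (Ne.symm hij)]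
      rw [DirectSum.decompose_of_mem_ne 𝓑 hm (by omega), map_zero]
  | add x y hx hy =>
    rw [B.d.map_add, DirectSum.decompose_add, DirectSum.decompose_add, DirectSum.add_apply,
      DirectSum.add_apply, AddSubgroup.coe_add, AddSubgroup.coe_add, hx, hy, B.d.map_add]

lemma aux_homog_boundary {i : ℤ} {x : S} (hx : x ∈ 𝓑 i) {p : S} (hp : B.d p = x) :
    ∃ p' ∈ 𝓑 (i - 1), B.d p' = x := by
  refine ⟨(DirectSum.decompose 𝓑 p (i-1) : S), SetLike.coe_mem _, ?_⟩
  rw [← aux_decompose_d, hp, DirectSum.decompose_of_mem_same 𝓑 hx]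

lemma aux_inv_deg0 {u : S} (hu : u ∈ 𝓑 0) (h : IsUnit u) :
    ∃ v ∈ 𝓑 0, u * v = 1 ∧ v * u = 1 := by
  obtain ⟨U, rfl⟩ := h
  have key : ∀ w : S, ∀ i : ℤ, (DirectSum.decompose 𝓑 ((U:S) * w) i : S) = (U:S) * (DirectSum.decompose 𝓑 w i : S)
      ∧ (DirectSum.decompose 𝓑 (w * (U:S)) i : S) = (DirectSum.decompose 𝓑 w i : S) * (U:S) := by
    intro w
    induction w using DirectSum.Decomposition.inductionOn 𝓑 with
    | zero => simp
    | homogeneous m =>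
      obtain ⟨m, hm⟩ := m
      rename_i j
      intro i
      have h1 : (U:S) * m ∈ 𝓑 j := by simpa using SetLike.mul_mem_graded hu hm
      have h2 : m * (U:S) ∈ 𝓑 j := by simpa using SetLike.mul_mem_graded hm hu
      by_cases hij : i = j
      · subst hij
        rw [DirectSum.decompose_of_mem_same 𝓑 h1, DirectSum.decompose_of_mem_same 𝓑 h2,
          DirectSum.decompose_of_mem_same 𝓑 hm]
        exact ⟨rfl, rfl⟩
      · rw [DirectSum.decompose_of_mem_ne 𝓑 h1 (Ne.symm hij), DirectSum.decompose_of_mem_ne 𝓑 h2 (Ne.symm hij),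
          DirectSum.decompose_of_mem_ne 𝓑 hm (Ne.symm hij)]
        simp
    | add x y hx hy =>
      intro i
      constructor
      · rw [mul_add, DirectSum.decompose_add, DirectSum.decompose_add, DirectSum.add_apply,
          DirectSum.add_apply, AddSubgroup.coe_add, AddSubgroup.coe_add, (hx i).1, (hy i).1, mul_add]
      · rw [add_mul, DirectSum.decompose_add, DirectSum.decompose_add, DirectSum.add_apply,
          DirectSum.add_apply, AddSubgroup.coe_add, AddSubgroup.coe_add, (hx i).2, (hy i).2, add_mul]
  refine ⟨(DirectSum.decompose 𝓑 (↑U⁻¹ : S) 0 : S), SetLike.coe_mem _, ?_, ?_⟩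
  · have := (key (↑U⁻¹ : S) 0).1
    rw [← this, Units.mul_inv, DirectSum.decompose_of_mem_same 𝓑 (SetLike.one_mem_graded 𝓑)]
  · have := (key (↑U⁻¹ : S) 0).2
    rw [← this, Units.inv_mul, DirectSum.decompose_of_mem_same 𝓑 (SetLike.one_mem_graded 𝓑)]

lemma aux_unit_act {u : S} (hu : u ∈ 𝓑 0) (hun : IsUnit u) {r : S} (hr : B.d r = u * u - u)
    {x : S} (hx : B.d x = 0) : ∃ p, u * x - x = B.d p := by
  obtain ⟨v, hv, huv, hvu⟩ := aux_inv_deg0 hu hun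
  refine ⟨v * (r * x), ?_⟩
  rw [aux_d_mul_deg0 B hv, aux_d_mul_cocycle B r hx, hr]
  have h1 : v * ((u * u - u) * x) = v * u * (u * x) - v * u * x := by
    rw [sub_mul, mul_sub, mul_assoc u u x, ← mul_assoc v u (u * x), ← mul_assoc v u x]
  rw [h1, hvu, one_mul, one_mul]

lemma aux_pow_act {u : S} (hu : u ∈ 𝓑 0) (hun : IsUnit u) {r : S} (hr : B.d r = u * u - u)
    {x : S} (hx : B.d x = 0) (m : ℕ) : ∃ p, u ^ m * x - x = B.d p := by
  induction m with
  | zero => exact ⟨0, by simp⟩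
  | succ k ih =>
    obtain ⟨p, hp⟩ := ih
    obtain ⟨p', hp'⟩ := aux_unit_act B hu hun hr hx
    refine ⟨u ^ k * p' + p, ?_⟩
    rw [map_add, aux_d_mul_deg0 B (aux_pow_mem hu k), ← hp', ← hp]
    noncomm_ring

end AuxHelpers

section AuxHelpers2
variable {R : Type} [Ring R] {𝒜 : ℤ → AddSubgroup R} [GradedRing 𝒜]
variable {S : Type} [Ring S] {𝓑 : ℤ → AddSubgroup S} [GradedRing 𝓑]
variable (A : DGRing R 𝒜) (B : DGRing S 𝓑)

lemma aux_e_mem_locSet {e : R} (he : e ∈ 𝒜 0) : e ∈ locSet A e :=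
  ⟨he, 1, 0, by simp⟩

lemma aux_locSet_mul {e : R} (he : e ∈ 𝒜 0) {t t' : R} (ht : t ∈ locSet A e)
    (ht' : t' ∈ locSet A e) : t * t' ∈ locSet A e := by
  obtain ⟨h0, m, q, hq⟩ := ht
  obtain ⟨h0', m', q', hq'⟩ := ht'
  refine ⟨by simpa using SetLike.mul_mem_graded h0 h0', m + m',
    e ^ m * q' + q * e ^ m' + q * A.d q', ?_⟩
  rw [map_add, map_add, aux_d_mul_deg0 A (aux_pow_mem he m),
    aux_d_mul_cocycle A q (aux_deg0_d A (aux_pow_mem he m')),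
    aux_d_mul_cocycle A q (A.d_sq q'),
    eq_add_of_sub_eq hq, eq_add_of_sub_eq hq', pow_add]
  noncomm_ring

lemma aux_pow_idem {e p : R} (he : e ∈ 𝒜 0) (hp : e * e - e = A.d p) (m : ℕ) (hm : 1 ≤ m) :
    ∃ s, e ^ m - e = A.d s := by
  induction m, hm using Nat.le_induction with
  | base => exact ⟨0, by simp⟩
  | succ m hm ih =>
    obtain ⟨s, hs⟩ := ih
    refine ⟨e * s + p, ?_⟩
    rw [map_add, aux_d_mul_deg0 A he, ← hs, ← hp, pow_succ']
    noncomm_ring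

lemma aux_T_act (f : DGRingHom A B) {e : R} (he : e ∈ 𝒜 0)
    (hidem : ∃ p, e * e - e = A.d p)
    (hU : ∀ t ∈ locSet A e, IsUnit (f.toRingHom t))
    {t : R} (ht : t ∈ locSet A e) {x : S} (hx : B.d x = 0) :
    ∃ p, f.toRingHom t * x - x = B.d p := by
  obtain ⟨ht0, m, q, hq⟩ := ht
  have hu : f.toRingHom e ∈ 𝓑 0 := f.deg_mem he
  have hun : IsUnit (f.toRingHom e) := hU e (aux_e_mem_locSet A he)
  obtain ⟨p₀, hp₀⟩ := hidem
  have hr : B.d (f.toRingHom p₀) = f.toRingHom e * f.toRingHom e - f.toRingHom e := by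
    rw [← f.comm_d, ← hp₀, map_sub, map_mul]
  obtain ⟨p₁, hp₁⟩ := aux_pow_act B hu hun hr hx m
  have hft : f.toRingHom t = B.d (f.toRingHom q) + (f.toRingHom e) ^ m := by
    rw [eq_add_of_sub_eq hq, map_add, map_pow, f.comm_d]
  refine ⟨p₁ + f.toRingHom q * x, ?_⟩
  rw [map_add, aux_d_mul_cocycle B (f.toRingHom q) hx, ← hp₁, hft]
  noncomm_ring

end AuxHelpers2

section Statement8

variable {R : Type} [Ring R] {𝒜 : ℤ → AddSubgroup R} [GradedRing 𝒜]

/-- Proposition 4.11 of the paper.  Let `A` be a commutative DG ring and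
`(e₁, ..., eₙ)` an idempotent covering sequence of `Ā = H⁰(A)`.  Let `Aₖ := A_{eₖ}` be the
localizations of `A` at the `eₖ`, with canonical homomorphisms `λₖ : A → Aₖ`.  Then the
homomorphism `λ = (λ₁, ..., λₙ) : A → A₁ × ⋯ × Aₙ` is a quasi-isomorphism, i.e. the
induced map `H(A) → ∏ₖ H(Aₖ)` is bijective in each degree. -/
theorem statement8 (A : DGRing R 𝒜) (hA : IsCommDGRing A)
    {n : ℕ} (e : Fin n → R) (he : IsIdempotentCoveringSeq A e)
    (W : Fin n → DGRingPack) (lam : ∀ k, DGRingHom A (W k).B)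
    (hloc : ∀ k, IsDGLocalization (lam k) (locSet A (e k))) :
    -- surjectivity of `H(λ)`:
    (∀ i : ℤ, ∀ b : ∀ k, (W k).S,
      (∀ k, b k ∈ (W k).𝓑 i ∧ (W k).B.d (b k) = 0) →
      ∃ a ∈ 𝒜 i, A.d a = 0 ∧ ∀ k, ∃ p, b k - (lam k).toRingHom a = (W k).B.d p) ∧
    -- injectivity of `H(λ)`:
    (∀ i : ℤ, ∀ a ∈ 𝒜 i, A.d a = 0 →
      (∀ k, ∃ p, (lam k).toRingHom a = (W k).B.d p) → ∃ q, A.d q = a) := by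
  constructor
  · -- surjectivity
    intro i b hb
    have key : ∀ k : Fin n, ∃ a ∈ 𝒜 i, A.d a = 0 ∧
        ∃ p, (lam k).toRingHom a - b k = (W k).B.d p := by
      intro k
      obtain ⟨hb1, hb2⟩ := hb k
      obtain ⟨a', ha', t, ht, hta⟩ := (hloc k).2.1 i (b k) hb1
      have h1 : (lam k).toRingHom (A.d a') = 0 := by
        rw [(lam k).comm_d, ← hta, aux_d_mul_deg0 (W k).B ((lam k).deg_mem ht.1), hb2, mul_zero]
      obtain ⟨t', ht', htt'⟩ := (hloc k).2.2 _ h1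
      refine ⟨t' * a', by simpa using SetLike.mul_mem_graded ht'.1 ha', ?_, ?_⟩
      · rw [aux_d_mul_deg0 A ht'.1, htt']
      · have hmul : t' * t ∈ locSet A (e k) := aux_locSet_mul A (he.1 k) ht' ht
        obtain ⟨p, hp⟩ := aux_T_act A (W k).B (lam k) (he.1 k) (he.2.1 k) (hloc k).1 hmul hb2
        refine ⟨p, ?_⟩
        rw [map_mul, ← hta, ← mul_assoc, ← map_mul]
        exact hp
    choose a ha hda hb' using key
    refine ⟨∑ k, e k * a k, ?_, ?_, ?_⟩
    · exact AddSubgroup.sum_mem _ fun k _ => by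
        simpa using SetLike.mul_mem_graded (he.1 k) (ha k)
    · rw [map_sum]
      exact Finset.sum_eq_zero fun k _ => by
        rw [aux_d_mul_deg0 A (he.1 k), hda k, mul_zero]
    · intro k
      have hfa : ∀ j, (W k).B.d ((lam k).toRingHom (a j)) = 0 := fun j => by
        rw [← (lam k).comm_d, hda j, map_zero]
      have hterm : ∀ j : Fin n, ∃ ρ, (lam k).toRingHom (e j * a j) -
          (if j = k then (lam k).toRingHom (a k) else 0) = (W k).B.d ρ := by
        intro j
        by_cases hjk : j = k
        · subst hjk
          simp only [if_pos rfl]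
          obtain ⟨ρ, hρ⟩ := aux_T_act A (W j).B (lam j) (he.1 j) (he.2.1 j) (hloc j).1
            (aux_e_mem_locSet A (he.1 j)) (hfa j)
          exact ⟨ρ, by rw [map_mul]; exact hρ⟩
        · obtain ⟨r, hr⟩ := he.2.2.1 k j fun h => hjk h.symm
          have hu : (lam k).toRingHom (e k) ∈ (W k).𝓑 0 := (lam k).deg_mem (he.1 k)
          obtain ⟨v, hv, huv, hvu⟩ := aux_inv_deg0 hu
            ((hloc k).1 _ (aux_e_mem_locSet A (he.1 k)))
          refine ⟨v * (lam k).toRingHom (r * a j), ?_⟩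
          simp only [if_neg hjk, sub_zero]
          have h2 : (lam k).toRingHom (e k) * (lam k).toRingHom (e j * a j) =
              (W k).B.d ((lam k).toRingHom (r * a j)) := by
            rw [← map_mul, ← mul_assoc, hr, ← aux_d_mul_cocycle A r (hda j), (lam k).comm_d]
          rw [aux_d_mul_deg0 (W k).B hv, ← h2, ← mul_assoc, hvu, one_mul]
      choose ρ hρ using hterm
      obtain ⟨p₀, hp₀⟩ := hb' k
      have hsum : (lam k).toRingHom (∑ j, e j * a j) - (lam k).toRingHom (a k) =
          (W k).B.d (∑ j, ρ j) := by
        rw [map_sum, map_sum]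
        have h4 : (lam k).toRingHom (a k) =
            ∑ j, (if j = k then (lam k).toRingHom (a k) else 0) := by simp
        rw [h4, ← Finset.sum_sub_distrib]
        exact Finset.sum_congr rfl fun j _ => hρ j
      refine ⟨-p₀ - ∑ j, ρ j, ?_⟩
      rw [map_sub, map_neg, ← hp₀, ← hsum]
      abel
  · -- injectivity
    intro i a hai hda hbd
    have key : ∀ k : Fin n, ∃ w, A.d w = e k * a := by
      intro k
      obtain ⟨p, hp⟩ := hbd k
      have hfa : (lam k).toRingHom a ∈ (W k).𝓑 i := (lam k).deg_mem hai
      obtain ⟨p', hp'mem, hp'⟩ := aux_homog_boundary (W k).B hfa hp.symm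
      obtain ⟨c, hc, t, ht, htc⟩ := (hloc k).2.1 (i - 1) p' hp'mem
      have h1 : (lam k).toRingHom (A.d c - t * a) = 0 := by
        rw [map_sub, (lam k).comm_d, map_mul, ← htc,
          aux_d_mul_deg0 (W k).B ((lam k).deg_mem ht.1), hp', sub_self]
      obtain ⟨t', ht', htt'⟩ := (hloc k).2.2 _ h1
      have h2 : t' * t * a = A.d (t' * c) := by
        rw [aux_d_mul_deg0 A ht'.1]
        rw [mul_sub] at htt'
        have h2' := sub_eq_zero.mp htt'
        rw [h2', mul_assoc]
      have hmul : t' * t ∈ locSet A (e k) := aux_locSet_mul A (he.1 k) ht' ht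
      obtain ⟨-, m, q, hq⟩ := hmul
      have h3 : e k ^ m * a = A.d (t' * c - q * a) := by
        rw [map_sub, aux_d_mul_cocycle A q hda, ← h2, ← hq, sub_mul, sub_sub_cancel]
      cases m with
      | zero =>
        refine ⟨e k * (t' * c - q * a), ?_⟩
        rw [aux_d_mul_deg0 A (he.1 k), ← h3, pow_zero, one_mul]
      | succ m =>
        obtain ⟨pp, hpp⟩ := he.2.1 k
        obtain ⟨s, hs⟩ := aux_pow_idem A (he.1 k) hpp (m + 1) (Nat.succ_le_succ (Nat.zero_le m))
        refine ⟨t' * c - q * a - s * a, ?_⟩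
        rw [map_sub, aux_d_mul_cocycle A s hda, ← h3, ← hs, sub_mul, sub_sub_cancel]
    choose w hw using key
    obtain ⟨π, hπ⟩ := he.2.2.2
    refine ⟨∑ k, w k - π * a, ?_⟩
    rw [map_sub, map_sum, Finset.sum_congr rfl fun k _ => hw k,
      aux_d_mul_cocycle A π hda, ← hπ, ← Finset.sum_mul, sub_mul, one_mul, sub_sub_cancel]


end Statement8
end
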